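/- arXiv:1512.08016 — 4 statements merged into one kernel-verified Lean document; each statement's English description precedes it below -/
import Mathlib

section
/- For every partition λ = (λ₁, …, λ_l) of length l ≥ 1 and every integer k ≥ 0, G^{k}_{(λ₁,…,λ_l)} = t^{λ₁(k+1) − l} (t^{k+1} − 1) · G^{k+1}_{(λ₂,…,λ_l)} in ℤ[t, t^{−1}]. -/
open Finset LaurentPolynomial

/-- `G^k_λ ∈ ℤ[t, t⁻¹]`: the coefficient of `z^{−|λ|} w₁^{λ₁} ⋯ w_l^{λ_l}` in the formal
product
`∏_{i=1}^{l} t^k (1 − wᵢ/z)(Σ_{j≥0} t^{(k+1)j} (wᵢ/z)^j)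
  · ∏_{1≤i<j≤l} (1 − w_j/wᵢ)(Σ_{j≥0} t^{j} (w_j/wᵢ)^j)`.
It is computed by expanding the product: `jm.1 i` is the exponent of `wᵢ/z` chosen from the
`i`-th factor, whose coefficient is `t^k` for exponent `0` and
`t^k (t^{(k+1)j} − t^{(k+1)(j−1)})` for exponent `j ≥ 1`; for a pair `p = (i,j)` with
`i < j`, `jm.2 p` is the exponent of `w_j/wᵢ`, with coefficient `1` for exponent `0` and
`t^j − t^{j−1}` for exponent `j ≥ 1`.  The conditions match the exponents of `z` and of each
`wᵢ`.  Only finitely many terms contribute, so the `finsum` is the honest coefficient. -/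
noncomputable def Ghl (k : ℕ) (lam : List ℕ) : LaurentPolynomial ℤ :=
  ∑ᶠ jm : (Fin lam.length → ℕ) × (Fin lam.length × Fin lam.length → ℕ),
    if (∀ p : Fin lam.length × Fin lam.length, ¬ p.1 < p.2 → jm.2 p = 0) ∧
        (∑ i, jm.1 i) = lam.sum ∧
        (∀ i : Fin lam.length,
          (jm.1 i : ℤ) + (∑ j, if j < i then (jm.2 (j, i) : ℤ) else 0)
            - (∑ j, if i < j then (jm.2 (i, j) : ℤ) else 0) = (lam.get i : ℤ))
      then (∏ i : Fin lam.length,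
          (if jm.1 i = 0 then T (k : ℤ)
            else T ((k : ℤ) + ((k : ℤ) + 1) * (jm.1 i : ℤ))
              - T ((k : ℤ) + ((k : ℤ) + 1) * ((jm.1 i : ℤ) - 1)))) *
        ∏ p : Fin lam.length × Fin lam.length,
          (if p.1 < p.2 then
            (if jm.2 p = 0 then 1 else T (jm.2 p : ℤ) - T ((jm.2 p : ℤ) - 1)) else 1)
      else 0

noncomputable def cc (k a : ℕ) : LaurentPolynomial ℤ :=
  if a = 0 then T (k : ℤ)
    else T ((k : ℤ) + ((k : ℤ) + 1) * (a : ℤ)) - T ((k : ℤ) + ((k : ℤ) + 1) * ((a : ℤ) - 1))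

noncomputable def dd (m : ℕ) : LaurentPolynomial ℤ :=
  if m = 0 then 1 else T (m : ℤ) - T ((m : ℤ) - 1)

def Cond (lam : List ℕ)
    (jm : (Fin lam.length → ℕ) × (Fin lam.length × Fin lam.length → ℕ)) : Prop :=
  (∀ p : Fin lam.length × Fin lam.length, ¬ p.1 < p.2 → jm.2 p = 0) ∧
    (∑ i, jm.1 i) = lam.sum ∧
    (∀ i : Fin lam.length,
      (jm.1 i : ℤ) + (∑ j, if j < i then (jm.2 (j, i) : ℤ) else 0)
        - (∑ j, if i < j then (jm.2 (i, j) : ℤ) else 0) = (lam.get i : ℤ))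

noncomputable def W (k : ℕ) (lam : List ℕ)
    (jm : (Fin lam.length → ℕ) × (Fin lam.length × Fin lam.length → ℕ)) :
    LaurentPolynomial ℤ :=
  (∏ i, cc k (jm.1 i)) * ∏ p : Fin lam.length × Fin lam.length,
    (if p.1 < p.2 then dd (jm.2 p) else 1)

instance (lam : List ℕ) (jm) : Decidable (Cond lam jm) := by
  unfold Cond; infer_instance

lemma Ghl_eq_finsum (k : ℕ) (lam : List ℕ) :
    Ghl k lam = ∑ᶠ jm, if Cond lam jm then W k lam jm else 0 := rfl

lemma cc_zero (k : ℕ) : cc k 0 = T (k : ℤ) := by simp [cc]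
lemma dd_zero : dd 0 = 1 := by simp [dd]

lemma cc_pos (k : ℕ) {a : ℕ} (ha : a ≠ 0) :
    cc k a = T (((k : ℤ) + 1) * (a : ℤ) - 1) * (T ((k : ℤ) + 1) - 1) := by
  rw [cc, if_neg ha]
  simp only [mul_sub, sub_mul, mul_one, one_mul, mul_assoc, ← T_add]
  ring_nf

lemma dd_pos {m : ℕ} (hm : m ≠ 0) : dd m = T ((m : ℤ) - 1) * (T 1 - 1) := by
  rw [dd, if_neg hm]
  simp only [mul_sub, sub_mul, mul_one, one_mul, mul_assoc, ← T_add]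
  ring_nf

lemma dd_sum (M : ℕ) : ∑ m ∈ range (M + 1), dd m = T (M : ℤ) := by
  induction M with
  | zero => simp [dd_zero, T_zero]
  | succ n ih =>
      rw [Finset.sum_range_succ, ih, dd_pos (Nat.succ_ne_zero n)]
      push_cast
      rw [mul_sub, mul_one, ← T_add]
      ring_nf

lemma key (k a : ℕ) :
    ∑ m ∈ range (a + 1), T (((k : ℤ) + 1) * (m : ℤ)) * (cc k (a - m) * dd m)
      = T (-1) * cc (k + 1) a := by
  rcases Nat.eq_zero_or_pos a with rfl | ha
  · rw [Finset.range_one, Finset.sum_singleton]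
    simp only [Nat.sub_self, cc_zero, dd_zero, mul_one, Nat.cast_zero, mul_zero, T_zero, one_mul]
    rw [← T_add]
    norm_num
  · obtain ⟨b, rfl⟩ : ∃ b, a = b + 1 := ⟨a - 1, (Nat.succ_pred_eq_of_pos ha).symm⟩
    rw [Finset.sum_range_succ]
    have hstep : ∀ m ∈ range (b + 1),
        T (((k : ℤ) + 1) * (m : ℤ)) * (cc k (b + 1 - m) * dd m)
          = T (((k : ℤ) + 1) * ((b : ℤ) + 1) - 1) * (T ((k : ℤ) + 1) - 1) * dd m := by
      intro m hm
      rw [Finset.mem_range] at hm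
      have hne : b + 1 - m ≠ 0 := by omega
      rw [cc_pos k hne]
      have hcast : ((b + 1 - m : ℕ) : ℤ) = (b : ℤ) + 1 - (m : ℤ) := by
        have : ((b + 1 - m : ℕ) : ℤ) = ((b + 1 : ℕ) : ℤ) - (m : ℤ) :=
          Int.ofNat_sub (by omega)
        rw [this]; push_cast; ring
      rw [hcast, ← mul_assoc, ← mul_assoc, ← T_add]
      congr 2
      ring
    rw [Finset.sum_congr rfl hstep, ← Finset.mul_sum, dd_sum b]
    have h1 : (b + 1 - (b + 1) : ℕ) = 0 := by omega
    rw [h1, cc_zero, dd_pos (Nat.succ_ne_zero b), cc_pos (k + 1) (Nat.succ_ne_zero b)]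
    push_cast
    simp only [mul_sub, sub_mul, mul_one, one_mul, mul_assoc, ← T_add]
    ring_nf

lemma sum_univ_get (lam : List ℕ) : ∑ i : Fin lam.length, lam.get i = lam.sum := by
  simpa [List.get_eq_getElem] using Fin.sum_univ_get lam

lemma cond_bound₁ {lam : List ℕ} {jm} (hc : Cond lam jm) (i : Fin lam.length) :
    jm.1 i ≤ lam.sum := by
  rw [← hc.2.1]
  exact Finset.single_le_sum (fun _ _ => Nat.zero_le _) (Finset.mem_univ i)

lemma cond_bound₂ {lam : List ℕ} {jm} (hc : Cond lam jm)
    (p : Fin lam.length × Fin lam.length) : jm.2 p ≤ lam.sum := by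
  obtain ⟨h₁, h₂, h₃⟩ := hc
  by_cases hlt : p.1 < p.2
  · -- the cut argument
    obtain ⟨i₀, j₀⟩ := p
    simp only at hlt ⊢
    set S : Finset (Fin lam.length) := univ.filter (fun i => j₀ ≤ i) with hS
    have hsum := Finset.sum_congr (rfl : S = S) (fun i _ => h₃ i)
    -- rewrite the LHS
    have hA : ∑ i ∈ S, ((jm.1 i : ℤ) + (∑ j, if j < i then (jm.2 (j, i) : ℤ) else 0)
        - (∑ j, if i < j then (jm.2 (i, j) : ℤ) else 0))
        = (∑ i ∈ S, (jm.1 i : ℤ))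
          + (∑ i ∈ S, ∑ j, if j < i then (jm.2 (j, i) : ℤ) else 0)
          - (∑ i ∈ S, ∑ j, if i < j then (jm.2 (i, j) : ℤ) else 0) := by
      rw [← Finset.sum_add_distrib, ← Finset.sum_sub_distrib]
    rw [hA] at hsum
    -- split the incoming double sum over j ∈ S / j ∉ S
    have hsplit : ∀ i : Fin lam.length,
        (∑ j, if j < i then (jm.2 (j, i) : ℤ) else 0)
          = (∑ j ∈ S, if j < i then (jm.2 (j, i) : ℤ) else 0)
            + ∑ j ∈ univ.filter (fun j => ¬ j₀ ≤ j), if j < i then (jm.2 (j, i) : ℤ) else 0 := by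
      intro i
      rw [← Finset.sum_filter_add_sum_filter_not univ (fun j => j₀ ≤ j)]
    have hout : ∀ i ∈ S, (∑ j, if i < j then (jm.2 (i, j) : ℤ) else 0)
        = ∑ j ∈ S, if i < j then (jm.2 (i, j) : ℤ) else 0 := by
      intro i hi
      rw [← Finset.sum_filter_add_sum_filter_not univ (fun j => j₀ ≤ j)]
      have : ∑ j ∈ univ.filter (fun j => ¬ j₀ ≤ j), (if i < j then (jm.2 (i, j) : ℤ) else 0) = 0 := by
        apply Finset.sum_eq_zero
        intro j hj
        rw [Finset.mem_filter] at hj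
        rw [hS, Finset.mem_filter] at hi
        rw [if_neg]
        intro hij
        exact hj.2 (le_trans hi.2 (le_of_lt hij))
      rw [this, add_zero]
    have hswap : (∑ i ∈ S, ∑ j ∈ S, if j < i then (jm.2 (j, i) : ℤ) else 0)
        = ∑ i ∈ S, ∑ j ∈ S, if i < j then (jm.2 (i, j) : ℤ) else 0 :=
      Finset.sum_comm
    rw [Finset.sum_congr rfl (fun i _ => hsplit i), Finset.sum_congr rfl hout,
      Finset.sum_add_distrib, hswap] at hsum
    have hsum2 : (∑ i ∈ S, (jm.1 i : ℤ))
        + (∑ i ∈ S, ∑ j ∈ univ.filter (fun j => ¬ j₀ ≤ j), if j < i then (jm.2 (j, i) : ℤ) else 0)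
        = ∑ i ∈ S, (lam.get i : ℤ) := by linarith [hsum]
    have hterm : (jm.2 (i₀, j₀) : ℤ)
        ≤ ∑ i ∈ S, ∑ j ∈ univ.filter (fun j => ¬ j₀ ≤ j), if j < i then (jm.2 (j, i) : ℤ) else 0 := by
      have hj₀S : j₀ ∈ S := by simp [hS]
      have hi₀ : i₀ ∈ univ.filter (fun j => ¬ j₀ ≤ j) := by
        simp only [Finset.mem_filter, Finset.mem_univ, true_and]
        exact not_le.mpr hlt
      calc (jm.2 (i₀, j₀) : ℤ)
          = (if i₀ < j₀ then (jm.2 (i₀, j₀) : ℤ) else 0) := by rw [if_pos hlt]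
        _ ≤ ∑ j ∈ univ.filter (fun j => ¬ j₀ ≤ j), if j < j₀ then (jm.2 (j, j₀) : ℤ) else 0 :=
            Finset.single_le_sum (f := fun j => if j < j₀ then (jm.2 (j, j₀) : ℤ) else 0)
              (fun j _ => by positivity) hi₀
        _ ≤ _ := Finset.single_le_sum
              (f := fun i => ∑ j ∈ univ.filter (fun j => ¬ j₀ ≤ j), if j < i then (jm.2 (j, i) : ℤ) else 0)
              (fun i _ => Finset.sum_nonneg (fun j _ => by positivity)) hj₀S
    have hle : (jm.2 (i₀, j₀) : ℤ) ≤ ∑ i ∈ S, (lam.get i : ℤ) := by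
      have h0 : (0 : ℤ) ≤ ∑ i ∈ S, (jm.1 i : ℤ) := Finset.sum_nonneg (fun i _ => by positivity)
      linarith
    have hle2 : (∑ i ∈ S, (lam.get i : ℤ)) ≤ (lam.sum : ℤ) := by
      rw [← sum_univ_get lam]
      push_cast
      exact Finset.sum_le_sum_of_subset_of_nonneg (Finset.subset_univ S)
        (fun i _ _ => by positivity)
    exact_mod_cast le_trans hle hle2
  · rw [h₁ p hlt]; exact Nat.zero_le _

def Box (l N : ℕ) : Finset ((Fin l → ℕ) × (Fin l × Fin l → ℕ)) :=
  (Fintype.piFinset fun _ => range (N + 1)) ×ˢ (Fintype.piFinset fun _ => range (N + 1))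

lemma mem_Box {l N : ℕ} (jm : (Fin l → ℕ) × (Fin l × Fin l → ℕ)) :
    jm ∈ Box l N ↔ (∀ i, jm.1 i ≤ N) ∧ (∀ p, jm.2 p ≤ N) := by
  simp [Box, Fintype.mem_piFinset, Nat.lt_succ_iff]

lemma Ghl_eq_sum (k : ℕ) (lam : List ℕ) (N : ℕ) (hN : lam.sum ≤ N) :
    Ghl k lam = ∑ jm ∈ Box lam.length N, if Cond lam jm then W k lam jm else 0 := by
  rw [Ghl_eq_finsum]
  apply finsum_eq_sum_of_support_subset
  intro jm hjm
  simp only [Function.mem_support] at hjm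
  have hc : Cond lam jm := by
    by_contra h
    rw [if_neg h] at hjm
    exact hjm rfl
  simp only [Finset.coe_sort_coe, Finset.mem_coe, mem_Box]
  exact ⟨fun i => le_trans (cond_bound₁ hc i) hN, fun p => le_trans (cond_bound₂ hc p) hN⟩

section Bij

variable {n : ℕ}

/-- Forward map: split off the data attached to the first row/column. -/
def phi (jm : (Fin (n + 1) → ℕ) × (Fin (n + 1) × Fin (n + 1) → ℕ)) :
    ((Fin n → ℕ) × (Fin n × Fin n → ℕ)) × (Fin n → ℕ) :=
  ((fun j => jm.1 j.succ + jm.2 (0, j.succ), fun p => jm.2 (p.1.succ, p.2.succ)),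
    fun j => jm.2 (0, j.succ))

/-- Backward map. -/
def psi (a : ℕ) (y : ((Fin n → ℕ) × (Fin n × Fin n → ℕ)) × (Fin n → ℕ)) :
    (Fin (n + 1) → ℕ) × (Fin (n + 1) × Fin (n + 1) → ℕ) :=
  (Fin.cases (a + ∑ j, y.2 j) (fun j => y.1.1 j - y.2 j),
    fun p => Fin.cases (Fin.cases 0 (fun j => y.2 j) p.2)
      (fun i => Fin.cases 0 (fun j => y.1.2 (i, j)) p.2) p.1)

end Bij

noncomputable def WB (k a : ℕ) {n : ℕ}
    (y : ((Fin n → ℕ) × (Fin n × Fin n → ℕ)) × (Fin n → ℕ)) : LaurentPolynomial ℤ :=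
  cc k (a + ∑ j, y.2 j) *
    ((∏ j, cc k (y.1.1 j - y.2 j) * dd (y.2 j)) *
      ∏ p : Fin n × Fin n, (if p.1 < p.2 then dd (y.1.2 p) else 1))

def CondB (μ : List ℕ) (y : ((Fin μ.length → ℕ) × (Fin μ.length × Fin μ.length → ℕ))
    × (Fin μ.length → ℕ)) : Prop :=
  Cond μ y.1 ∧ ∀ j, y.2 j ≤ y.1.1 j

instance (μ : List ℕ) (y) : Decidable (CondB μ y) := by unfold CondB; infer_instance


section CondA

variable {a : ℕ} {μ : List ℕ}
  {jm : (Fin (μ.length + 1) → ℕ) × (Fin (μ.length + 1) × Fin (μ.length + 1) → ℕ)}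

lemma condA_vertex0 (hc : Cond (a :: μ) jm) :
    jm.1 0 = a + ∑ j : Fin μ.length, jm.2 (0, j.succ) := by
  have h3 : (jm.1 (0 : Fin (μ.length + 1)) : ℤ)
      + (∑ j : Fin (μ.length + 1), if j < (0 : Fin (μ.length + 1)) then (jm.2 (j, 0) : ℤ) else 0)
      - (∑ j : Fin (μ.length + 1), if (0 : Fin (μ.length + 1)) < j then (jm.2 (0, j) : ℤ) else 0)
      = ((a :: μ).get (0 : Fin (μ.length + 1)) : ℤ) := hc.2.2 (0 : Fin (μ.length + 1))
  rw [Fin.sum_univ_succ (f := fun j => if (0 : Fin (μ.length + 1)) < j then (jm.2 (0, j) : ℤ) else 0)]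
    at h3
  simp only [Fin.not_lt_zero, if_false, Finset.sum_const_zero, add_zero, lt_self_iff_false,
    Fin.succ_pos, if_true, zero_add, List.get_cons_zero] at h3
  have hs : ((∑ j : Fin μ.length, jm.2 (0, j.succ) : ℕ) : ℤ)
      = ∑ j : Fin μ.length, (jm.2 (0, j.succ) : ℤ) := by push_cast; rfl
  omega

lemma condA_vertex_succ (hc : Cond (a :: μ) jm) (i : Fin μ.length) :
    (jm.1 i.succ : ℤ) + (jm.2 (0, i.succ) : ℤ)
      + (∑ j : Fin μ.length, if j < i then (jm.2 (j.succ, i.succ) : ℤ) else 0)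
      - (∑ j : Fin μ.length, if i < j then (jm.2 (i.succ, j.succ) : ℤ) else 0)
      = (μ.get i : ℤ) := by
  have h3 : (jm.1 i.succ : ℤ)
      + (∑ j : Fin (μ.length + 1), if j < i.succ then (jm.2 (j, i.succ) : ℤ) else 0)
      - (∑ j : Fin (μ.length + 1), if i.succ < j then (jm.2 (i.succ, j) : ℤ) else 0)
      = ((a :: μ).get i.succ : ℤ) := hc.2.2 i.succ
  rw [Fin.sum_univ_succ (f := fun j => if j < i.succ then (jm.2 (j, i.succ) : ℤ) else 0),
    Fin.sum_univ_succ (f := fun j => if i.succ < j then (jm.2 (i.succ, j) : ℤ) else 0)] at h3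
  simp only [Fin.succ_pos, if_true, Fin.not_lt_zero, if_false, zero_add,
    Fin.succ_lt_succ_iff, List.get_cons_succ'] at h3
  linarith

lemma condA_sum (hc : Cond (a :: μ) jm) :
    (∑ j : Fin μ.length, jm.1 j.succ) + ∑ j : Fin μ.length, jm.2 (0, j.succ) = μ.sum := by
  have h2 : ∑ i : Fin (μ.length + 1), jm.1 i = (a :: μ).sum := hc.2.1
  rw [Fin.sum_univ_succ, condA_vertex0 hc, List.sum_cons] at h2
  omega

end CondA

lemma step2 (k a N : ℕ) (μ : List ℕ) (hN : a + μ.sum ≤ N) :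
    (∑ jm ∈ Box (μ.length + 1) N, if Cond (a :: μ) jm then W k (a :: μ) jm else 0)
      = ∑ y ∈ (Box μ.length N ×ˢ Fintype.piFinset fun _ : Fin μ.length => range (N + 1)),
          if CondB μ y then WB k a y else 0 := by
  rw [← Finset.sum_filter, ← Finset.sum_filter]
  have hNμ : μ.sum ≤ N := by omega
  refine Finset.sum_nbij' phi (psi a) ?_ ?_ ?_ ?_ ?_
  · -- phi maps into the target
    intro jm hjm
    rw [Finset.mem_filter] at hjm
    obtain ⟨hbox, hc⟩ := hjm
    have hcB1 : Cond μ (phi jm).1 := by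
      refine ⟨?_, ?_, ?_⟩
      · intro p hp
        exact hc.1 (p.1.succ, p.2.succ) (by simpa [Fin.succ_lt_succ_iff] using hp)
      · rw [show (phi jm).1.1 = fun j => jm.1 j.succ + jm.2 (0, j.succ) from rfl,
          Finset.sum_add_distrib]
        exact condA_sum hc
      · intro i
        have hv := condA_vertex_succ hc i
        show ((jm.1 i.succ + jm.2 (0, i.succ) : ℕ) : ℤ)
            + (∑ j, if j < i then (jm.2 (j.succ, i.succ) : ℤ) else 0)
            - (∑ j, if i < j then (jm.2 (i.succ, j.succ) : ℤ) else 0) = (μ.get i : ℤ)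
        push_cast
        linarith
    rw [Finset.mem_filter]
    refine ⟨Finset.mem_product.mpr ⟨?_, ?_⟩, hcB1, fun j => Nat.le_add_left _ _⟩
    · rw [mem_Box]
      exact ⟨fun j => le_trans (cond_bound₁ hcB1 j) hNμ,
        fun p => le_trans (cond_bound₂ hcB1 p) hNμ⟩
    · rw [Fintype.mem_piFinset]
      intro j
      rw [Finset.mem_range, Nat.lt_succ_iff]
      calc jm.2 (0, j.succ) ≤ (a :: μ).sum := cond_bound₂ hc _
        _ ≤ N := by rw [List.sum_cons]; omega
  · -- psi maps back
    intro y hy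
    rw [Finset.mem_filter] at hy
    obtain ⟨hbox, hcB, hm⟩ := hy
    rw [Finset.mem_product, mem_Box, Fintype.mem_piFinset] at hbox
    obtain ⟨⟨hb1, hb2⟩, hb3⟩ := hbox
    have hb3' : ∀ j, y.2 j ≤ N := fun j => Nat.lt_succ_iff.mp (Finset.mem_range.mp (hb3 j))
    have hsum_m : ∑ j, y.2 j ≤ μ.sum := by
      rw [← hcB.2.1]
      exact Finset.sum_le_sum (fun j _ => hm j)
    have hcond : Cond (a :: μ) (psi a y) := by
      refine ⟨?_, ?_, ?_⟩
      · rintro ⟨i, j⟩ hp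
        simp only at hp
        rcases Fin.eq_zero_or_eq_succ (n := μ.length) i with rfl | ⟨i', rfl⟩ <;>
          rcases Fin.eq_zero_or_eq_succ (n := μ.length) j with rfl | ⟨j', rfl⟩
        · simp [psi]
        · exact absurd (Fin.succ_pos j') hp
        · simp [psi]
        · simp only [psi, Fin.cases_succ]
          exact hcB.1 (i', j') (by simpa [Fin.succ_lt_succ_iff] using hp)
      · show ∑ i : Fin (μ.length + 1), (psi a y).1 i = (a :: μ).sum
        rw [Fin.sum_univ_succ]
        simp only [psi, Fin.cases_zero, Fin.cases_succ, List.sum_cons]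
        have h : (∑ j, (y.1.1 j - y.2 j)) + ∑ j, y.2 j = ∑ j, y.1.1 j := by
          rw [← Finset.sum_add_distrib]
          exact Finset.sum_congr rfl fun j _ => Nat.sub_add_cancel (hm j)
        have h2 := hcB.2.1
        omega
      · intro i
        rcases Fin.eq_zero_or_eq_succ (n := μ.length) i with rfl | ⟨i', rfl⟩
        · show ((psi a y).1 0 : ℤ)
              + (∑ j : Fin (μ.length + 1), if j < (0 : Fin (μ.length + 1))
                  then ((psi a y).2 (j, 0) : ℤ) else 0)
              - (∑ j : Fin (μ.length + 1), if (0 : Fin (μ.length + 1)) < j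
                  then ((psi a y).2 (0, j) : ℤ) else 0)
              = ((a :: μ).get (0 : Fin (μ.length + 1)) : ℤ)
          rw [Fin.sum_univ_succ (f := fun j => if (0 : Fin (μ.length + 1)) < j
            then ((psi a y).2 (0, j) : ℤ) else 0)]
          simp only [psi, Fin.cases_zero, Fin.cases_succ, Fin.not_lt_zero, if_false,
            Finset.sum_const_zero, lt_self_iff_false, Fin.succ_pos, if_true, zero_add, add_zero,
            List.get_cons_zero]
          push_cast
          ring
        · show ((psi a y).1 i'.succ : ℤ)
              + (∑ j : Fin (μ.length + 1), if j < i'.succ then ((psi a y).2 (j, i'.succ) : ℤ) else 0)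
              - (∑ j : Fin (μ.length + 1), if i'.succ < j then ((psi a y).2 (i'.succ, j) : ℤ) else 0)
              = ((a :: μ).get i'.succ : ℤ)
          rw [Fin.sum_univ_succ (f := fun j => if j < i'.succ then ((psi a y).2 (j, i'.succ) : ℤ) else 0),
            Fin.sum_univ_succ (f := fun j => if i'.succ < j then ((psi a y).2 (i'.succ, j) : ℤ) else 0)]
          simp only [psi, Fin.cases_zero, Fin.cases_succ, Fin.succ_pos, if_true,
            Fin.not_lt_zero, if_false, zero_add, Fin.succ_lt_succ_iff, List.get_cons_succ']
          have hc3 := hcB.2.2 i'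
          have hsub : ((y.1.1 i' - y.2 i' : ℕ) : ℤ) = (y.1.1 i' : ℤ) - (y.2 i' : ℤ) :=
            Int.ofNat_sub (hm i')
          linarith
    rw [Finset.mem_filter, mem_Box]
    refine ⟨⟨?_, ?_⟩, hcond⟩
    · intro i
      rcases Fin.eq_zero_or_eq_succ (n := μ.length) i with rfl | ⟨i', rfl⟩
      · show a + ∑ j, y.2 j ≤ N
        omega
      · show y.1.1 i' - y.2 i' ≤ N
        exact le_trans (Nat.sub_le _ _) (hb1 i')
    · rintro ⟨i, j⟩
      rcases Fin.eq_zero_or_eq_succ (n := μ.length) i with rfl | ⟨i', rfl⟩ <;>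
        rcases Fin.eq_zero_or_eq_succ (n := μ.length) j with rfl | ⟨j', rfl⟩
      · show (0 : ℕ) ≤ N; exact Nat.zero_le _
      · show y.2 j' ≤ N; exact hb3' j'
      · show (0 : ℕ) ≤ N; exact Nat.zero_le _
      · show y.1.2 (i', j') ≤ N; exact hb2 _
  · -- left inverse
    intro jm hjm
    have hc : Cond (a :: μ) jm := (Finset.mem_filter.mp hjm).2
    refine Prod.ext ?_ ?_
    · funext i
      rcases Fin.eq_zero_or_eq_succ (n := μ.length) i with rfl | ⟨i', rfl⟩
      · show a + ∑ j : Fin μ.length, jm.2 (0, j.succ) = jm.1 0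
        exact (condA_vertex0 hc).symm
      · show jm.1 i'.succ + jm.2 (0, i'.succ) - jm.2 (0, i'.succ) = jm.1 i'.succ
        omega
    · funext p
      obtain ⟨i, j⟩ := p
      rcases Fin.eq_zero_or_eq_succ (n := μ.length) i with rfl | ⟨i', rfl⟩ <;>
        rcases Fin.eq_zero_or_eq_succ (n := μ.length) j with rfl | ⟨j', rfl⟩
      · show (0 : ℕ) = jm.2 (0, 0)
        exact (hc.1 ((0 : Fin (μ.length + 1)), (0 : Fin (μ.length + 1))) (lt_irrefl _)).symm
      · rfl
      · show (0 : ℕ) = jm.2 (i'.succ, 0)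
        exact (hc.1 (i'.succ, (0 : Fin (μ.length + 1))) (Fin.not_lt_zero _)).symm
      · rfl
  · -- right inverse
    intro y hy
    rw [Finset.mem_filter] at hy
    have hm : ∀ j, y.2 j ≤ y.1.1 j := hy.2.2
    refine Prod.ext (Prod.ext ?_ ?_) ?_
    · funext j
      show y.1.1 j - y.2 j + y.2 j = y.1.1 j
      exact Nat.sub_add_cancel (hm j)
    · funext p
      show (psi a y).2 (p.1.succ, p.2.succ) = y.1.2 p
      simp [psi]
    · funext j
      rfl
  · -- weights
    intro jm hjm
    have hc : Cond (a :: μ) jm := (Finset.mem_filter.mp hjm).2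
    show (∏ i : Fin (μ.length + 1), cc k (jm.1 i)) *
        (∏ p : Fin (μ.length + 1) × Fin (μ.length + 1), if p.1 < p.2 then dd (jm.2 p) else 1)
        = WB k a (phi jm)
    rw [WB]
    simp only [phi]
    rw [← condA_vertex0 hc]
    rw [Fin.prod_univ_succ (f := fun i => cc k (jm.1 i)),
      Fintype.prod_prod_type
        (f := fun p : Fin (μ.length + 1) × Fin (μ.length + 1) => if p.1 < p.2 then dd (jm.2 p) else 1),
      Fintype.prod_prod_type
        (f := fun p : Fin μ.length × Fin μ.length => if p.1 < p.2 then dd (jm.2 (p.1.succ, p.2.succ)) else 1)]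
    simp only [Fin.prod_univ_succ, lt_self_iff_false, if_false, Fin.succ_pos, if_true,
      Fin.not_lt_zero, one_mul, mul_one, Fin.succ_lt_succ_iff, Nat.add_sub_cancel]
    rw [Finset.prod_mul_distrib]
    ring

lemma T_sum {ι : Type*} (s : Finset ι) (g : ι → ℤ) :
    (T (∑ i ∈ s, g i) : LaurentPolynomial ℤ) = ∏ i ∈ s, T (g i) := by
  induction s using Finset.cons_induction with
  | empty => simp
  | cons a s ha ih => rw [Finset.sum_cons, T_add, ih, Finset.prod_cons]

lemma step3 (k a N : ℕ) (μ : List ℕ) (ha : a ≠ 0) (hN : a + μ.sum ≤ N)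
    (x : (Fin μ.length → ℕ) × (Fin μ.length × Fin μ.length → ℕ)) (hx : Cond μ x) :
    ∑ m ∈ Fintype.piFinset (fun _ : Fin μ.length => range (N + 1)),
        (if CondB μ (x, m) then WB k a (x, m) else 0)
      = T ((a : ℤ) * ((k : ℤ) + 1) - ((μ.length : ℤ) + 1)) * (T ((k : ℤ) + 1) - 1)
          * W (k + 1) μ x := by
  have hxb : ∀ j, x.1 j ≤ N := fun j => le_trans (cond_bound₁ hx j) (by omega)
  have hcondB : ∀ m : Fin μ.length → ℕ, CondB μ (x, m) ↔ ∀ j, m j ≤ x.1 j := by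
    intro m
    constructor
    · exact fun h => h.2
    · exact fun h => ⟨hx, h⟩
  -- restrict the sum
  have hset : (Fintype.piFinset (fun _ : Fin μ.length => range (N + 1))).filter
        (fun m => ∀ j, m j ≤ x.1 j)
      = Fintype.piFinset (fun j => range (x.1 j + 1)) := by
    ext m
    simp only [Finset.mem_filter, Fintype.mem_piFinset, Finset.mem_range, Nat.lt_succ_iff]
    exact ⟨fun h => h.2, fun h => ⟨fun j => le_trans (h j) (hxb j), h⟩⟩
  have h1 : ∑ m ∈ Fintype.piFinset (fun _ : Fin μ.length => range (N + 1)),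
        (if CondB μ (x, m) then WB k a (x, m) else 0)
      = ∑ m ∈ Fintype.piFinset (fun j => range (x.1 j + 1)), WB k a (x, m) := by
    rw [← hset, Finset.sum_filter]
    exact Finset.sum_congr rfl fun m _ => if_congr (hcondB m) rfl rfl
  rw [h1]
  -- evaluate the weight
  have h2 : ∀ m : Fin μ.length → ℕ,
      WB k a (x, m) = (T ((a : ℤ) * ((k : ℤ) + 1) - 1) * (T ((k : ℤ) + 1) - 1)
          * ∏ p : Fin μ.length × Fin μ.length, (if p.1 < p.2 then dd (x.2 p) else 1))
        * ∏ j, (T (((k : ℤ) + 1) * (m j : ℤ)) * (cc k (x.1 j - m j) * dd (m j))) := by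
    intro m
    rw [WB]
    have hane : a + ∑ j, m j ≠ 0 := by
      intro h
      exact ha (by omega)
    rw [cc_pos k hane]
    have hexp : ((k : ℤ) + 1) * ((a + ∑ j, m j : ℕ) : ℤ) - 1
        = ((a : ℤ) * ((k : ℤ) + 1) - 1) + ∑ j, ((k : ℤ) + 1) * (m j : ℤ) := by
      push_cast
      rw [← Finset.mul_sum]
      ring
    rw [hexp, T_add, T_sum]
    rw [Finset.prod_mul_distrib (f := fun j => T (((k : ℤ) + 1) * (m j : ℤ)))
      (g := fun j => cc k (x.1 j - m j) * dd (m j))]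
    ring
  rw [Finset.sum_congr rfl fun m _ => h2 m, ← Finset.mul_sum]
  rw [← Finset.prod_univ_sum (t := fun j => range (x.1 j + 1))
    (f := fun j c => T (((k : ℤ) + 1) * (c : ℤ)) * (cc k (x.1 j - c) * dd c))]
  rw [Finset.prod_congr rfl fun j _ => key k (x.1 j)]
  rw [Finset.prod_mul_distrib, Finset.prod_const, Finset.card_univ, Fintype.card_fin, T_pow]
  rw [W]
  have hT : (T ((a : ℤ) * ((k : ℤ) + 1) - 1) : LaurentPolynomial ℤ) * T ((μ.length : ℤ) * (-1))
      = T ((a : ℤ) * ((k : ℤ) + 1) - ((μ.length : ℤ) + 1)) := by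
    rw [← T_add]
    congr 1
    ring
  calc T ((a : ℤ) * ((k : ℤ) + 1) - 1) * (T ((k : ℤ) + 1) - 1)
        * (∏ p : Fin μ.length × Fin μ.length, (if p.1 < p.2 then dd (x.2 p) else 1))
        * (T ((μ.length : ℤ) * (-1)) * ∏ j, cc (k + 1) (x.1 j))
      = (T ((a : ℤ) * ((k : ℤ) + 1) - 1) * T ((μ.length : ℤ) * (-1))) * (T ((k : ℤ) + 1) - 1)
        * ((∏ j, cc (k + 1) (x.1 j)) *
          ∏ p : Fin μ.length × Fin μ.length, (if p.1 < p.2 then dd (x.2 p) else 1)) := by ring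
    _ = _ := by rw [hT]

/-- The recursion `G^{k}_{(λ₁,…,λ_l)} = t^{λ₁(k+1) − l} (t^{k+1} − 1) G^{k+1}_{(λ₂,…,λ_l)}`
in `ℤ[t, t⁻¹]`, for every partition `λ` of length `l ≥ 1` and every integer `k ≥ 0`. -/
theorem Ghl_recursion (k : ℕ) (lam : List ℕ) (h0 : lam ≠ [])
    (h1 : lam.Pairwise (· ≥ ·)) (h2 : ∀ x ∈ lam, 0 < x) :
    Ghl k lam =
      T ((lam.headI : ℤ) * ((k : ℤ) + 1) - (lam.length : ℤ)) * (T ((k : ℤ) + 1) - 1) *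
        Ghl (k + 1) lam.tail := by
  cases lam with
  | nil => exact absurd rfl h0
  | cons a μ =>
    have ha : a ≠ 0 := (h2 a List.mem_cons_self).ne'
    have hsum : (a :: μ).sum ≤ a + μ.sum := by simp [List.sum_cons]
    have main := (Ghl_eq_sum k (a :: μ) (a + μ.sum) hsum).trans
      (step2 k a (a + μ.sum) μ (le_refl _))
    rw [main, Finset.sum_product]
    simp only [List.tail_cons, List.headI_cons, List.length_cons]
    push_cast
    rw [Ghl_eq_sum (k + 1) μ (a + μ.sum) (by omega), Finset.mul_sum]
    refine Finset.sum_congr rfl fun x hx => ?_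
    by_cases hc : Cond μ x
    · rw [if_pos hc]
      exact step3 k a (a + μ.sum) μ ha (le_refl _) x hc
    · rw [if_neg hc, mul_zero]
      refine Finset.sum_eq_zero fun m _ => ?_
      rw [if_neg]
      exact fun hcB => hc hcB.1
end

section
/- For every partition λ = (λ₁, …, λ_l) of length l, 𝔉_λ(u) = ∏_{i=1}^{l} (u t^{i−1} x)^{λᵢ} in ℤ[t, u, x]. -/
open Finset

/-- `𝔉_λ(u) ∈ ℤ[t, u, x]` (with `t = X 0`, `u = X 1`, `x = X 2`): the coefficient of
`w₁^{−λ₁} ⋯ w_l^{−λ_l}` in the formal product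
`∏_{i=1}^{l} (Σ_{k≥0} (ux)^k wᵢ^{−k}) · ∏_{1≤j<i≤l} (1 − w_j/wᵢ)(Σ_{k≥0} t^k (w_j/wᵢ)^k)`.
It is computed by expanding the product: `km.1 i` is the exponent chosen from the `i`-th
factor `Σ_k (ux)^k wᵢ^{−k}` (contributing `(ux)^{k}` and `wᵢ^{−k}`), and for a pair
`p = (j,i)` with `j < i`, `km.2 p` is the exponent of the ratio `w_j/wᵢ`, whose coefficient
in `(1 − w_j/wᵢ)(Σ_k t^k (w_j/wᵢ)^k)` is `1` for exponent `0` and `t^k − t^{k−1}` for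
exponent `k ≥ 1`.  The condition matches the exponent of each `wᵢ` with `−λᵢ`.  Only
finitely many terms contribute, so the `finsum` is the honest coefficient. -/
noncomputable def Fvx (lam : List ℕ) : MvPolynomial (Fin 3) ℤ :=
  ∑ᶠ km : (Fin lam.length → ℕ) × (Fin lam.length × Fin lam.length → ℕ),
    if (∀ p : Fin lam.length × Fin lam.length, ¬ p.1 < p.2 → km.2 p = 0) ∧
        (∀ a : Fin lam.length,
          -(km.1 a : ℤ) + (∑ b, if a < b then (km.2 (a, b) : ℤ) else 0)
            - (∑ c, if c < a then (km.2 (c, a) : ℤ) else 0) = -(lam.get a : ℤ))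
      then (∏ i : Fin lam.length, (MvPolynomial.X 1 * MvPolynomial.X 2) ^ (km.1 i)) *
        ∏ p : Fin lam.length × Fin lam.length,
          (if p.1 < p.2 then
            (if km.2 p = 0 then 1
              else (MvPolynomial.X 0) ^ (km.2 p) - (MvPolynomial.X 0) ^ (km.2 p - 1))
            else 1)
      else 0

namespace FvxAux

noncomputable def tt : MvPolynomial (Fin 3) ℤ := MvPolynomial.X 0

noncomputable def cc (k : ℕ) : MvPolynomial (Fin 3) ℤ :=
  if k = 0 then 1 else tt ^ k - tt ^ (k - 1)

lemma telescope (B : ℕ) : ∑ v ∈ range (B + 1), cc v = tt ^ B := by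
  induction B with
  | zero => simp [cc]
  | succ B ih =>
      rw [Finset.sum_range_succ, ih, cc]
      rw [if_neg (Nat.succ_ne_zero B)]
      simp only [Nat.add_sub_cancel]
      ring

lemma telescope' {B N : ℕ} (h : B ≤ N) :
    ∑ v : Fin (N + 1), (if (v : ℕ) ≤ B then cc v else 0) = tt ^ B := by
  rw [Fin.sum_univ_eq_sum_range (fun v => if v ≤ B then cc v else 0)]
  rw [← telescope B]
  rw [← Finset.sum_subset (Finset.range_subset_range.2 (by omega) :
        range (B + 1) ⊆ range (N + 1))]
  · exact Finset.sum_congr rfl fun v hv => if_pos (by simpa [Nat.lt_succ_iff] using hv)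
  · intro v _ hv
    rw [if_neg (by simpa [Nat.lt_succ_iff] using hv)]

lemma prodIteZero {ι : Type*} [Fintype ι] (P : ι → Prop) [DecidablePred P]
    (f : ι → MvPolynomial (Fin 3) ℤ) :
    (∏ i, if P i then f i else 0) = if (∀ i, P i) then ∏ i, f i else 0 := by
  by_cases h : ∀ i, P i
  · rw [if_pos h]; exact Finset.prod_congr rfl fun i _ => if_pos (h i)
  · rw [if_neg h]
    push_neg at h
    obtain ⟨i, hi⟩ := h
    exact Finset.prod_eq_zero (Finset.mem_univ i) (if_neg hi)

section Defs
variable {l : ℕ}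

def colS (m : Fin l × Fin l → ℕ) (a : Fin l) : ℕ := ∑ c, if c < a then m (c, a) else 0
def rowS (m : Fin l × Fin l → ℕ) (a : Fin l) : ℕ := ∑ b, if a < b then m (a, b) else 0
def supp (m : Fin l × Fin l → ℕ) : Prop := ∀ p, ¬ p.1 < p.2 → m p = 0
def valid (lam : Fin l → ℕ) (m : Fin l × Fin l → ℕ) : Prop :=
  ∀ a, colS m a ≤ lam a + rowS m a

instance (m : Fin l × Fin l → ℕ) : Decidable (supp m) := by
  unfold supp; infer_instance

instance (lam : Fin l → ℕ) (m : Fin l × Fin l → ℕ) : Decidable (valid lam m) := by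
  unfold valid; infer_instance

noncomputable def cprod (m : Fin l × Fin l → ℕ) : MvPolynomial (Fin 3) ℤ :=
  ∏ p, if p.1 < p.2 then cc (m p) else 1

lemma colS_eq_of_supp {m : Fin l × Fin l → ℕ} (hm : supp m) (a : Fin l) :
    colS m a = ∑ c, m (c, a) := by
  refine Finset.sum_congr rfl fun c _ => ?_
  by_cases h : c < a
  · rw [if_pos h]
  · rw [if_neg h, hm (c, a) h]

lemma rowS_eq_of_supp {m : Fin l × Fin l → ℕ} (hm : supp m) (a : Fin l) :
    rowS m a = ∑ b, m (a, b) := by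
  refine Finset.sum_congr rfl fun b _ => ?_
  by_cases h : a < b
  · rw [if_pos h]
  · rw [if_neg h, hm (a, b) h]

lemma sum_rowS (m : Fin l × Fin l → ℕ) : ∑ a, rowS m a = ∑ a, colS m a := by
  unfold rowS colS
  rw [Finset.sum_comm]

/-- total size bound for valid supported `m` -/
lemma total_le {lam : Fin l → ℕ} {m : Fin l × Fin l → ℕ}
    (hs : supp m) (hv : valid lam m) :
    ∑ p, m p ≤ ∑ a : Fin l, (a : ℕ) * lam a := by
  have h1 : ∑ p : Fin l × Fin l, ((p.2 : ℕ)) * m p = ∑ a : Fin l, (a : ℕ) * colS m a := by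
    rw [Fintype.sum_prod_type]
    rw [Finset.sum_comm]
    refine Finset.sum_congr rfl fun a _ => ?_
    rw [colS_eq_of_supp hs, Finset.mul_sum]
  have h2 : ∑ p : Fin l × Fin l, ((p.1 : ℕ)) * m p = ∑ a : Fin l, (a : ℕ) * rowS m a := by
    rw [Fintype.sum_prod_type]
    refine Finset.sum_congr rfl fun a _ => ?_
    rw [rowS_eq_of_supp hs, Finset.mul_sum]
  have h3 : ∑ a : Fin l, (a : ℕ) * colS m a ≤ ∑ a : Fin l, ((a : ℕ) * lam a + (a : ℕ) * rowS m a) := by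
    refine Finset.sum_le_sum fun a _ => ?_
    rw [← Nat.mul_add]
    exact Nat.mul_le_mul_left _ (hv a)
  rw [Finset.sum_add_distrib] at h3
  have h4 : ∑ p : Fin l × Fin l, (((p.1 : ℕ)) * m p + m p) ≤
      ∑ p : Fin l × Fin l, ((p.2 : ℕ)) * m p := by
    refine Finset.sum_le_sum fun p _ => ?_
    by_cases h : p.1 < p.2
    · have : (p.1 : ℕ) + 1 ≤ (p.2 : ℕ) := h
      calc ((p.1 : ℕ)) * m p + m p = ((p.1 : ℕ) + 1) * m p := by ring
        _ ≤ ((p.2 : ℕ)) * m p := Nat.mul_le_mul_right _ this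
    · rw [hs p h]; simp
  rw [Finset.sum_add_distrib] at h4
  omega

lemma entry_le {lam : Fin l → ℕ} {m : Fin l × Fin l → ℕ}
    (hs : supp m) (hv : valid lam m) (p : Fin l × Fin l) :
    m p ≤ ∑ a : Fin l, (a : ℕ) * lam a :=
  le_trans (Finset.single_le_sum (fun q _ => Nat.zero_le (m q)) (Finset.mem_univ p))
    (total_le hs hv)

noncomputable def T (l : ℕ) (lam : Fin l → ℕ) (N : ℕ) : MvPolynomial (Fin 3) ℤ :=
  ∑ m : Fin l × Fin l → Fin (N + 1),
    if supp (fun p => (m p : ℕ)) ∧ valid lam (fun p => (m p : ℕ))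
    then cprod (fun p => (m p : ℕ)) else 0

lemma T_zero (lam : Fin 0 → ℕ) (N : ℕ) : T 0 lam N = 1 := by
  rw [T]
  rw [Fintype.sum_eq_single (fun p : Fin 0 × Fin 0 => (0 : Fin (N + 1)))]
  · rw [if_pos]
    · rw [cprod]
      exact Finset.prod_of_isEmpty _
    · constructor
      · intro p; exact p.1.elim0
      · intro a; exact a.elim0
  · intro m hm
    exfalso
    apply hm
    funext p
    exact p.1.elim0


end Defs

section Asm
variable {l : ℕ}

/-- assemble a matrix on `Fin (l+1)` from column-0 `z`, first row `r`, and core `m`. -/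
def asm (z : Fin (l + 1) → ℕ) (r : Fin l → ℕ) (m : Fin l × Fin l → ℕ) :
    Fin (l + 1) × Fin (l + 1) → ℕ :=
  fun p => Fin.cases (z p.1) (fun i => Fin.cases (r i) (fun j => m (j, i)) p.1) p.2

@[simp] lemma asm_zero (z : Fin (l + 1) → ℕ) (r : Fin l → ℕ) (m : Fin l × Fin l → ℕ)
    (j : Fin (l + 1)) : asm z r m (j, 0) = z j := rfl

@[simp] lemma asm_zero_succ (z : Fin (l + 1) → ℕ) (r : Fin l → ℕ) (m : Fin l × Fin l → ℕ)
    (i : Fin l) : asm z r m (0, i.succ) = r i := by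
  simp [asm]

@[simp] lemma asm_succ_succ (z : Fin (l + 1) → ℕ) (r : Fin l → ℕ) (m : Fin l × Fin l → ℕ)
    (j i : Fin l) : asm z r m (j.succ, i.succ) = m (j, i) := by
  simp [asm]

lemma supp_asm (z : Fin (l + 1) → ℕ) (r : Fin l → ℕ) (m : Fin l × Fin l → ℕ) :
    supp (asm z r m) ↔ (∀ j, z j = 0) ∧ supp m := by
  constructor
  · intro H
    refine ⟨fun j => H (j, 0) (by simp), fun p hp => ?_⟩
    have := H (p.1.succ, p.2.succ) (by simpa [Fin.succ_lt_succ_iff] using hp)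
    simpa using this
  · rintro ⟨hz, hm⟩ p hp
    rcases p with ⟨j, i⟩
    induction i using Fin.cases with
    | zero => simpa using hz j
    | succ i =>
        induction j using Fin.cases with
        | zero => exact absurd (Fin.succ_pos i) hp
        | succ j =>
            rw [asm_succ_succ]
            exact hm (j, i) (by simpa [Fin.succ_lt_succ_iff] using hp)

lemma colS_asm_zero (z : Fin (l + 1) → ℕ) (r : Fin l → ℕ) (m : Fin l × Fin l → ℕ) :
    colS (asm z r m) 0 = 0 := by
  unfold colS
  exact Finset.sum_eq_zero fun c _ => if_neg (Fin.not_lt_zero c)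

lemma colS_asm_succ (z : Fin (l + 1) → ℕ) (r : Fin l → ℕ) (m : Fin l × Fin l → ℕ)
    (a : Fin l) : colS (asm z r m) a.succ = r a + colS m a := by
  unfold colS
  rw [Fin.sum_univ_succ]
  congr 1
  · refine Finset.sum_congr rfl fun c _ => ?_
    simp [Fin.succ_lt_succ_iff]

lemma rowS_asm_zero (z : Fin (l + 1) → ℕ) (r : Fin l → ℕ) (m : Fin l × Fin l → ℕ) :
    rowS (asm z r m) 0 = ∑ i, r i := by
  unfold rowS
  rw [Fin.sum_univ_succ]
  rw [if_neg (lt_irrefl _)]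
  rw [zero_add]
  refine Finset.sum_congr rfl fun b _ => ?_
  rw [if_pos (Fin.succ_pos b), asm_zero_succ]

lemma rowS_asm_succ (z : Fin (l + 1) → ℕ) (r : Fin l → ℕ) (m : Fin l × Fin l → ℕ)
    (a : Fin l) : rowS (asm z r m) a.succ = rowS m a := by
  unfold rowS
  rw [Fin.sum_univ_succ]
  rw [if_neg (Fin.not_lt_zero _)]
  rw [zero_add]
  refine Finset.sum_congr rfl fun b _ => ?_
  simp [Fin.succ_lt_succ_iff]

lemma valid_asm (lam : Fin (l + 1) → ℕ) (z : Fin (l + 1) → ℕ) (r : Fin l → ℕ)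
    (m : Fin l × Fin l → ℕ) :
    valid lam (asm z r m) ↔
      ∀ a : Fin l, r a + colS m a ≤ lam a.succ + rowS m a := by
  unfold valid
  rw [Fin.forall_fin_succ]
  constructor
  · rintro ⟨-, h⟩ a
    have := h a
    rwa [colS_asm_succ, rowS_asm_succ] at this
  · intro h
    refine ⟨?_, fun a => ?_⟩
    · rw [colS_asm_zero]; exact Nat.zero_le _
    · rw [colS_asm_succ, rowS_asm_succ]; exact h a

lemma cprod_asm (z : Fin (l + 1) → ℕ) (r : Fin l → ℕ) (m : Fin l × Fin l → ℕ) :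
    cprod (asm z r m) = (∏ i, cc (r i)) * cprod m := by
  unfold cprod
  rw [Fintype.prod_prod_type, Fin.prod_univ_succ,
    show (∏ p : Fin l × Fin l, if p.1 < p.2 then cc (m p) else 1)
        = ∏ j : Fin l, ∏ i : Fin l, if (j, i).1 < (j, i).2 then cc (m (j, i)) else 1
      from Fintype.prod_prod_type _]
  congr 1
  · rw [Fin.prod_univ_succ]
    simp [Fin.succ_pos]
  · refine Finset.prod_congr rfl fun j _ => ?_
    rw [Fin.prod_univ_succ]
    simp [Fin.succ_lt_succ_iff]

end Asm

section Rec
variable {l : ℕ}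

lemma sum_succ_expand (l : ℕ) (lam : Fin (l + 1) → ℕ) :
    ∑ a : Fin (l + 1), (a : ℕ) * lam a
      = ∑ i : Fin l, lam i.succ + ∑ i : Fin l, (i : ℕ) * lam i.succ := by
  rw [Fin.sum_univ_succ]
  simp only [Fin.val_zero, zero_mul, zero_add, Fin.val_succ, add_mul, one_mul]
  rw [Finset.sum_add_distrib]
  exact Nat.add_comm _ _

lemma row_le_total {m : Fin l × Fin l → ℕ} (hs : supp m) (a : Fin l) :
    rowS m a ≤ ∑ p, m p := by
  rw [rowS_eq_of_supp hs, Fintype.sum_prod_type]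
  exact Finset.single_le_sum (f := fun x => ∑ y, m (x, y))
    (fun x _ => Nat.zero_le _) (Finset.mem_univ a)

/-- The inner sum over the first row `r`. -/
lemma r_sum (l N : ℕ) (lam : Fin (l + 1) → ℕ)
    (hN : ∑ a : Fin (l + 1), (a : ℕ) * lam a ≤ N)
    (m : Fin l × Fin l → ℕ) :
    (∑ r : Fin l → Fin (N + 1),
      if supp m ∧ (∀ a : Fin l, (r a : ℕ) + colS m a ≤ lam a.succ + rowS m a)
      then (∏ i, cc ((r i : ℕ))) * cprod m else 0)
    = if supp m ∧ valid (fun i => lam i.succ) m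
      then tt ^ (∑ i : Fin l, lam i.succ) * cprod m else 0 := by
  by_cases h : supp m ∧ valid (fun i => lam i.succ) m
  · obtain ⟨hs, hv⟩ := h
    rw [if_pos ⟨hs, hv⟩]
    set B : Fin l → ℕ := fun a => lam a.succ + rowS m a - colS m a with hB
    have hBle : ∀ a, B a ≤ N := by
      intro a
      have h1 : rowS m a ≤ ∑ p, m p := row_le_total hs a
      have h2 : ∑ p, m p ≤ ∑ i : Fin l, (i : ℕ) * lam i.succ := total_le hs hv
      have h3 : lam a.succ ≤ ∑ i : Fin l, lam i.succ :=
        Finset.single_le_sum (f := fun i : Fin l => lam i.succ)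
          (fun i _ => Nat.zero_le _) (Finset.mem_univ a)
      have h4 := sum_succ_expand l lam
      simp only [hB]
      omega
    have hcond : ∀ (r : Fin l → Fin (N + 1)),
        (supp m ∧ (∀ a, (r a : ℕ) + colS m a ≤ lam a.succ + rowS m a))
          ↔ (∀ a, (r a : ℕ) ≤ B a) := by
      intro r
      constructor
      · rintro ⟨-, h2⟩ a
        have ha1 := h2 a
        have ha2 : colS m a ≤ lam a.succ + rowS m a := hv a
        have hBa : B a = lam a.succ + rowS m a - colS m a := rfl
        omega
      · intro h2
        refine ⟨hs, fun a => ?_⟩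
        have ha1 := h2 a
        have ha2 : colS m a ≤ lam a.succ + rowS m a := hv a
        have hBa : B a = lam a.succ + rowS m a - colS m a := rfl
        omega
    have key : ∀ r : Fin l → Fin (N + 1),
        (if supp m ∧ (∀ a, (r a : ℕ) + colS m a ≤ lam a.succ + rowS m a)
          then (∏ i, cc ((r i : ℕ))) * cprod m else 0)
        = (∏ i, if (r i : ℕ) ≤ B i then cc ((r i : ℕ)) else 0) * cprod m := by
      intro r
      rw [prodIteZero (fun i => (r i : ℕ) ≤ B i) (fun i => cc ((r i : ℕ)))]
      by_cases hr : ∀ a, (r a : ℕ) ≤ B a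
      · rw [if_pos ((hcond r).mpr hr), if_pos hr]
      · rw [if_neg (fun hh => hr ((hcond r).mp hh)), if_neg hr, zero_mul]
    rw [Finset.sum_congr rfl (fun r _ => key r), ← Finset.sum_mul]
    congr 1
    rw [← Fintype.prod_sum (fun i (v : Fin (N + 1)) => if (v : ℕ) ≤ B i then cc ((v : ℕ)) else 0)]
    rw [Finset.prod_congr rfl (fun i (_ : i ∈ univ) => telescope' (hBle i))]
    rw [Finset.prod_pow_eq_pow_sum]
    congr 1
    have h5 : ∀ a, B a + colS m a = lam a.succ + rowS m a := by
      intro a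
      have ha2 : colS m a ≤ lam a.succ + rowS m a := hv a
      have hBa : B a = lam a.succ + rowS m a - colS m a := rfl
      omega
    have h6 : ∑ a, (B a + colS m a) = ∑ a, (lam a.succ + rowS m a) :=
      Finset.sum_congr rfl fun a _ => h5 a
    rw [Finset.sum_add_distrib, Finset.sum_add_distrib, ← sum_rowS] at h6
    omega
  · rw [if_neg h]
    refine Finset.sum_eq_zero fun r _ => ?_
    rw [if_neg]
    rintro ⟨hs, h2⟩
    exact h ⟨hs, fun a => le_trans (Nat.le_add_left _ _) (h2 a)⟩

/-- the splitting equivalence -/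
def E (l N : ℕ) :
    ((Fin (l + 1) → Fin (N + 1)) × (Fin l → Fin (N + 1)) × (Fin l × Fin l → Fin (N + 1)))
      ≃ (Fin (l + 1) × Fin (l + 1) → Fin (N + 1)) where
  toFun x := fun p =>
    Fin.cases (x.1 p.1) (fun i => Fin.cases (x.2.1 i) (fun j => x.2.2 (j, i)) p.1) p.2
  invFun m := (fun j => m (j, 0), fun i => m (0, i.succ), fun q => m (q.1.succ, q.2.succ))
  left_inv x := by
    rcases x with ⟨z, r, m⟩
    refine Prod.ext ?_ (Prod.ext ?_ ?_)
    · funext j; simp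
    · funext i; simp
    · funext q; simp
  right_inv m := by
    funext p
    rcases p with ⟨j, i⟩
    induction i using Fin.cases with
    | zero => simp
    | succ i =>
        induction j using Fin.cases with
        | zero => simp
        | succ j => simp

lemma hE (l N : ℕ) (z : Fin (l + 1) → Fin (N + 1)) (r : Fin l → Fin (N + 1))
    (m : Fin l × Fin l → Fin (N + 1)) :
    (fun p => ((E l N (z, r, m)) p : ℕ))
      = asm (fun j => (z j : ℕ)) (fun i => (r i : ℕ)) (fun q => (m q : ℕ)) := by
  funext p
  rcases p with ⟨j, i⟩
  induction i using Fin.cases with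
  | zero => simp [E, asm]
  | succ i =>
      induction j using Fin.cases with
      | zero => simp [E, asm]
      | succ j => simp [E, asm]


lemma hF (l N : ℕ) (lam : Fin (l + 1) → ℕ)
    (z : Fin (l + 1) → Fin (N + 1)) (r : Fin l → Fin (N + 1))
    (m : Fin l × Fin l → Fin (N + 1)) :
    (if supp (fun p => ((E l N (z, r, m)) p : ℕ)) ∧
          valid lam (fun p => ((E l N (z, r, m)) p : ℕ))
      then cprod (fun p => ((E l N (z, r, m)) p : ℕ)) else 0)
    = if z = 0 then
        (if supp (fun q => (m q : ℕ)) ∧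
            (∀ a : Fin l, (r a : ℕ) + colS (fun q => (m q : ℕ)) a
              ≤ lam a.succ + rowS (fun q => (m q : ℕ)) a)
          then (∏ i, cc ((r i : ℕ))) * cprod (fun q => (m q : ℕ)) else 0)
      else 0 := by
  rw [hE l N z r m]
  by_cases hz : z = 0
  · subst hz
    rw [if_pos rfl]
    rw [cprod_asm]
    by_cases hc : supp (fun q => (m q : ℕ)) ∧
        (∀ a : Fin l, (r a : ℕ) + colS (fun q => (m q : ℕ)) a
          ≤ lam a.succ + rowS (fun q => (m q : ℕ)) a)
    · rw [if_pos hc, if_pos]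
      exact ⟨(supp_asm _ _ _).mpr ⟨fun j => rfl, hc.1⟩, (valid_asm lam _ _ _).mpr hc.2⟩
    · rw [if_neg hc, if_neg]
      intro hh
      exact hc ⟨((supp_asm _ _ _).mp hh.1).2, (valid_asm lam _ _ _).mp hh.2⟩
  · rw [if_neg hz, if_neg]
    rintro ⟨h1, -⟩
    apply hz
    funext j
    have := ((supp_asm _ _ _).mp h1).1 j
    exact Fin.ext (by simpa using this)

lemma T_succ (l : ℕ) (lam : Fin (l + 1) → ℕ) (N : ℕ)
    (hN : ∑ a : Fin (l + 1), (a : ℕ) * lam a ≤ N) :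
    T (l + 1) lam N = tt ^ (∑ i : Fin l, lam i.succ) * T l (fun i => lam i.succ) N := by
  classical
  rw [T]
  rw [← Equiv.sum_comp (E l N) (fun m => if supp (fun p => (m p : ℕ)) ∧
        valid lam (fun p => (m p : ℕ)) then cprod (fun p => (m p : ℕ)) else 0)]
  rw [Fintype.sum_prod_type]
  have step1 : ∀ z : Fin (l + 1) → Fin (N + 1),
      (∑ y : (Fin l → Fin (N + 1)) × (Fin l × Fin l → Fin (N + 1)),
        if supp (fun p => ((E l N (z, y)) p : ℕ)) ∧
            valid lam (fun p => ((E l N (z, y)) p : ℕ))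
          then cprod (fun p => ((E l N (z, y)) p : ℕ)) else 0)
      = if z = 0 then
          (∑ y : (Fin l → Fin (N + 1)) × (Fin l × Fin l → Fin (N + 1)),
            if supp (fun q => (y.2 q : ℕ)) ∧
                (∀ a : Fin l, (y.1 a : ℕ) + colS (fun q => (y.2 q : ℕ)) a
                  ≤ lam a.succ + rowS (fun q => (y.2 q : ℕ)) a)
              then (∏ i, cc ((y.1 i : ℕ))) * cprod (fun q => (y.2 q : ℕ)) else 0)
        else 0 := by
    intro z
    by_cases hz : z = 0
    · rw [if_pos hz]
      refine Finset.sum_congr rfl fun y _ => ?_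
      rw [show (z, y) = (z, y.1, y.2) by rw [Prod.mk.injEq]; exact ⟨rfl, rfl⟩]
      rw [hF l N lam z y.1 y.2, if_pos hz]
    · rw [if_neg hz]
      refine Finset.sum_eq_zero fun y _ => ?_
      rw [show (z, y) = (z, y.1, y.2) by rw [Prod.mk.injEq]; exact ⟨rfl, rfl⟩]
      rw [hF l N lam z y.1 y.2, if_neg hz]
  rw [Finset.sum_congr rfl fun z _ => step1 z]
  rw [Finset.sum_ite_eq' Finset.univ (0 : Fin (l + 1) → Fin (N + 1))]
  rw [if_pos (Finset.mem_univ _)]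
  rw [Fintype.sum_prod_type]
  rw [Finset.sum_comm]
  have step2 : ∀ m : Fin l × Fin l → Fin (N + 1),
      (∑ r : Fin l → Fin (N + 1),
        if supp (fun q => (m q : ℕ)) ∧
            (∀ a : Fin l, (r a : ℕ) + colS (fun q => (m q : ℕ)) a
              ≤ lam a.succ + rowS (fun q => (m q : ℕ)) a)
          then (∏ i, cc ((r i : ℕ))) * cprod (fun q => (m q : ℕ)) else 0)
      = if supp (fun q => (m q : ℕ)) ∧ valid (fun i => lam i.succ) (fun q => (m q : ℕ))
          then tt ^ (∑ i : Fin l, lam i.succ) * cprod (fun q => (m q : ℕ)) else 0 :=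
    fun m => r_sum l N lam hN (fun q => (m q : ℕ))
  rw [Finset.sum_congr rfl fun m _ => step2 m]
  rw [T, Finset.mul_sum]
  refine Finset.sum_congr rfl fun m _ => ?_
  by_cases h : supp (fun q => (m q : ℕ)) ∧ valid (fun i => lam i.succ) (fun q => (m q : ℕ))
  · rw [if_pos h, if_pos h]
  · rw [if_neg h, if_neg h, mul_zero]

lemma T_eq (l : ℕ) (lam : Fin l → ℕ) (N : ℕ)
    (hN : ∑ a : Fin l, (a : ℕ) * lam a ≤ N) :
    T l lam N = tt ^ (∑ a : Fin l, (a : ℕ) * lam a) := by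
  induction l with
  | zero => simp [T_zero]
  | succ l ih =>
      have hexp := sum_succ_expand l lam
      have hN' : ∑ a : Fin l, (a : ℕ) * lam a.succ ≤ N := by omega
      rw [T_succ l lam N hN, ih (fun i => lam i.succ) hN', ← pow_add, hexp]

end Rec

lemma sum_coe_fin {ι : Type*} [Fintype ι] [DecidableEq ι] (N : ℕ)
    (f : (ι → ℕ) → MvPolynomial (Fin 3) ℤ) :
    ∑ g ∈ Fintype.piFinset (fun _ : ι => Finset.range (N + 1)), f g
      = ∑ y : ι → Fin (N + 1), f (fun i => (y i : ℕ)) := by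
  refine Finset.sum_nbij'
    (fun g => fun i => (⟨g i % (N + 1), Nat.mod_lt _ (Nat.succ_pos N)⟩ : Fin (N + 1)))
    (fun y => fun i => (y i : ℕ)) (fun g _ => Finset.mem_univ _) ?_ ?_ ?_ ?_
  · intro y _
    simp [Fintype.mem_piFinset, Nat.lt_succ_iff, Fin.is_le]
  · intro g hg
    simp only [Fintype.mem_piFinset, Finset.mem_range] at hg
    funext i
    exact Nat.mod_eq_of_lt (hg i)
  · intro y _
    funext i
    exact Fin.ext (Nat.mod_eq_of_lt (y i).isLt)
  · intro g hg
    simp only [Fintype.mem_piFinset, Finset.mem_range] at hg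
    congr 1
    funext i
    exact (Nat.mod_eq_of_lt (hg i)).symm

lemma castrow {l : ℕ} (m : Fin l × Fin l → ℕ) (a : Fin l) :
    ((rowS m a : ℕ) : ℤ) = ∑ b, if a < b then (m (a, b) : ℤ) else 0 := by
  simp only [rowS, Nat.cast_sum, Nat.cast_ite, Nat.cast_zero]

lemma castcol {l : ℕ} (m : Fin l × Fin l → ℕ) (a : Fin l) :
    ((colS m a : ℕ) : ℤ) = ∑ c, if c < a then (m (c, a) : ℤ) else 0 := by
  simp only [colS, Nat.cast_sum, Nat.cast_ite, Nat.cast_zero]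

lemma N_split {l : ℕ} (g : Fin l → ℕ) :
    ∑ a : Fin l, ((a : ℕ) + 1) * g a = (∑ a : Fin l, (a : ℕ) * g a) + ∑ a : Fin l, g a := by
  simp only [add_mul, one_mul]
  rw [Finset.sum_add_distrib]


lemma cprod_eq {l : ℕ} (m : Fin l × Fin l → ℕ) :
    (∏ p : Fin l × Fin l,
      (if p.1 < p.2 then
        (if m p = 0 then 1
          else (MvPolynomial.X 0 : MvPolynomial (Fin 3) ℤ) ^ (m p)
            - (MvPolynomial.X 0) ^ (m p - 1))
        else 1)) = cprod m := by
  simp only [cprod, cc, tt]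

end FvxAux

open FvxAux

/-- For every partition `λ = (λ₁, …, λ_l)` of length `l`,
`𝔉_λ(u) = ∏_{i=1}^{l} (u t^{i−1} x)^{λᵢ}` in `ℤ[t, u, x]`. -/
theorem Fvx_eq (lam : List ℕ) (h1 : lam.Pairwise (· ≥ ·)) (h2 : ∀ x ∈ lam, 0 < x) :
    Fvx lam =
      ∏ i : Fin lam.length,
        (MvPolynomial.X 1 * (MvPolynomial.X 0) ^ (i : ℕ) * MvPolynomial.X 2) ^ (lam.get i) := by
  classical
  set L := lam.length with hLdef
  set G : Fin L → ℕ := lam.get with hG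
  set N : ℕ := ∑ a : Fin L, ((a : ℕ) + 1) * G a with hNdef
  have hb1 : ∑ a : Fin L, (a : ℕ) * G a ≤ N := by
    have := N_split G
    omega
  set U : MvPolynomial (Fin 3) ℤ := MvPolynomial.X 1 * MvPolynomial.X 2 with hU
  -- the summand of the finsum
  set F : (Fin L → ℕ) × (Fin L × Fin L → ℕ) → MvPolynomial (Fin 3) ℤ := fun km =>
    if (∀ p : Fin L × Fin L, ¬ p.1 < p.2 → km.2 p = 0) ∧
        (∀ a : Fin L,
          -(km.1 a : ℤ) + (∑ b, if a < b then (km.2 (a, b) : ℤ) else 0)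
            - (∑ c, if c < a then (km.2 (c, a) : ℤ) else 0) = -(G a : ℤ))
      then (∏ i : Fin L, U ^ (km.1 i)) *
        ∏ p : Fin L × Fin L,
          (if p.1 < p.2 then
            (if km.2 p = 0 then 1
              else (MvPolynomial.X 0) ^ (km.2 p) - (MvPolynomial.X 0) ^ (km.2 p - 1))
            else 1)
      else 0 with hF
  have hFvx : Fvx lam = ∑ᶠ km, F km := rfl
  -- support bound
  have hsub : Function.support F ⊆
      ((Fintype.piFinset fun _ : Fin L => Finset.range (N + 1)) ×ˢ
        (Fintype.piFinset fun _ : Fin L × Fin L => Finset.range (N + 1)) :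
          Finset ((Fin L → ℕ) × (Fin L × Fin L → ℕ))) := by
    intro km hkm
    simp only [Function.mem_support, hF] at hkm
    have hcond : (∀ p : Fin L × Fin L, ¬ p.1 < p.2 → km.2 p = 0) ∧
        (∀ a : Fin L,
          -(km.1 a : ℤ) + (∑ b, if a < b then (km.2 (a, b) : ℤ) else 0)
            - (∑ c, if c < a then (km.2 (c, a) : ℤ) else 0) = -(G a : ℤ)) := by
      by_contra h
      rw [if_neg h] at hkm
      exact hkm rfl
    obtain ⟨hs, he⟩ := hcond
    have hs' : supp km.2 := hs
    have hv : valid G km.2 := by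
      intro a
      have h := he a
      rw [← castrow, ← castcol] at h
      omega
    have htot : ∑ p, km.2 p ≤ ∑ i : Fin L, (i : ℕ) * G i := total_le hs' hv
    have hNsp := N_split G
    simp only [Finset.coe_product, Set.mem_prod, Finset.mem_coe,
      Fintype.mem_piFinset, Finset.mem_range, Nat.lt_succ_iff]
    constructor
    · intro a
      have h := he a
      rw [← castrow, ← castcol] at h
      have hr : rowS km.2 a ≤ ∑ p, km.2 p := row_le_total hs' a
      have hga : G a ≤ ∑ i : Fin L, G i :=
        Finset.single_le_sum (f := G) (fun i _ => Nat.zero_le _) (Finset.mem_univ a)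
      omega
    · intro p
      have := entry_le hs' hv p
      omega
  rw [hFvx, finsum_eq_sum_of_support_subset F hsub]
  rw [Finset.sum_product, Finset.sum_comm]
  -- collapse the k-sum
  have inner : ∀ m : Fin L × Fin L → ℕ,
      (∑ k ∈ Fintype.piFinset (fun _ : Fin L => Finset.range (N + 1)), F (k, m))
      = if supp m ∧ valid G m then U ^ (∑ a, G a) * cprod m else 0 := by
    intro m
    by_cases hP : supp m ∧ valid G m
    · obtain ⟨hs, hv⟩ := hP
      rw [if_pos ⟨hs, hv⟩]
      have htot : ∑ p, m p ≤ ∑ i : Fin L, (i : ℕ) * G i := total_le hs hv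
      have hNsp := N_split G
      refine (Finset.sum_eq_single_of_mem (fun a => G a + rowS m a - colS m a) ?mem ?other).trans ?val
      case mem =>
        simp only [Fintype.mem_piFinset, Finset.mem_range, Nat.lt_succ_iff]
        intro a
        have hva := hv a
        have hr : rowS m a ≤ ∑ p, m p := row_le_total hs a
        have hga : G a ≤ ∑ i : Fin L, G i :=
          Finset.single_le_sum (f := G) (fun i _ => Nat.zero_le _) (Finset.mem_univ a)
        omega
      case other =>
        intro k _ hne
        simp only [hF]
        rw [if_neg]
        rintro ⟨-, he⟩
        apply hne
        funext a
        have h := he a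
        rw [← castrow, ← castcol] at h
        have hva := hv a
        omega
      case val =>
        simp only [hF]
        rw [if_pos]
        · rw [Finset.prod_pow_eq_pow_sum, cprod_eq]
          congr 2
          have h6 : ∑ a, ((G a + rowS m a - colS m a) + colS m a)
              = ∑ a, (G a + rowS m a) :=
            Finset.sum_congr rfl fun a _ => by have := hv a; omega
          rw [Finset.sum_add_distrib, Finset.sum_add_distrib, ← sum_rowS] at h6
          omega
        · refine ⟨hs, fun a => ?_⟩
          rw [← castrow, ← castcol]
          have hva := hv a
          omega
    · rw [if_neg hP]
      refine Finset.sum_eq_zero fun k _ => ?_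
      simp only [hF]
      rw [if_neg]
      rintro ⟨hs, he⟩
      refine hP ⟨hs, fun a => ?_⟩
      have h := he a
      rw [← castrow, ← castcol] at h
      omega
  rw [Finset.sum_congr rfl fun m _ => inner m]
  have pull : ∀ m : Fin L × Fin L → ℕ,
      (if supp m ∧ valid G m then U ^ (∑ a, G a) * cprod m else 0)
        = U ^ (∑ a, G a) * (if supp m ∧ valid G m then cprod m else 0) := by
    intro m
    by_cases h : supp m ∧ valid G m
    · rw [if_pos h, if_pos h]
    · rw [if_neg h, if_neg h, mul_zero]
  rw [Finset.sum_congr rfl fun m _ => pull m, ← Finset.mul_sum]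
  rw [sum_coe_fin N (fun g => if supp g ∧ valid G g then cprod g else 0)]
  have hT : (∑ y : Fin L × Fin L → Fin (N + 1),
      if supp (fun i => ((y i : ℕ))) ∧ valid G (fun i => ((y i : ℕ)))
        then cprod (fun i => ((y i : ℕ))) else 0) = T L G N := by
    rw [T]
  rw [hT, T_eq L G N hb1]
  -- final algebra
  have hfin : ∀ i : Fin L,
      (MvPolynomial.X 1 * (MvPolynomial.X 0) ^ (i : ℕ) * MvPolynomial.X 2) ^ (G i)
        = U ^ (G i) * tt ^ ((i : ℕ) * G i) := by
    intro i
    rw [hU, tt]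
    ring
  rw [Finset.prod_congr rfl fun i _ => hfin i, Finset.prod_mul_distrib,
    Finset.prod_pow_eq_pow_sum, Finset.prod_pow_eq_pow_sum]
end

section
/- For every partition λ = (λ₁, …, λ_l) of length l ≥ 1, 𝔉_{(λ₁,…,λ_l)}(u) = (ux)^{λ₁} · 𝔉_{(λ₂,…,λ_l)}(tu) in ℤ[t, u, x], where 𝔉_{(λ₂,…,λ_l)}(tu) denotes the result of substituting tu for u in 𝔉_{(λ₂,…,λ_l)}(u). -/
open Finset MvPolynomial

noncomputable def cf (k : ℕ) : MvPolynomial (Fin 3) ℤ :=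
  if k = 0 then 1 else X 0 ^ k - X 0 ^ (k - 1)

lemma cf_sum (K : ℕ) : ∑ m ∈ range (K + 1), cf m = X 0 ^ K := by
  induction K with
  | zero => simp [cf]
  | succ K ih =>
    rw [Finset.sum_range_succ, ih, cf]
    simp

def Cnd (n : ℕ) (μ : Fin n → ℕ) (km : (Fin n → ℕ) × (Fin n × Fin n → ℕ)) : Prop :=
  (∀ p : Fin n × Fin n, ¬ p.1 < p.2 → km.2 p = 0) ∧
  (∀ a : Fin n, -(km.1 a : ℤ) + (∑ b, if a < b then (km.2 (a, b) : ℤ) else 0)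
      - (∑ c, if c < a then (km.2 (c, a) : ℤ) else 0) = -(μ a : ℤ))

instance CndDec (n : ℕ) (μ : Fin n → ℕ) (km : (Fin n → ℕ) × (Fin n × Fin n → ℕ)) :
    Decidable (Cnd n μ km) :=
  inferInstanceAs (Decidable ((∀ p : Fin n × Fin n, ¬ p.1 < p.2 → km.2 p = 0) ∧
    (∀ a : Fin n, -(km.1 a : ℤ) + (∑ b, if a < b then (km.2 (a, b) : ℤ) else 0)
      - (∑ c, if c < a then (km.2 (c, a) : ℤ) else 0) = -(μ a : ℤ))))

noncomputable def trm (n : ℕ) (km : (Fin n → ℕ) × (Fin n × Fin n → ℕ)) :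
    MvPolynomial (Fin 3) ℤ :=
  (∏ i, (X 1 * X 2) ^ (km.1 i)) * ∏ p : Fin n × Fin n, if p.1 < p.2 then cf (km.2 p) else 1

lemma Fvx_eq' (lam : List ℕ) :
    Fvx lam = ∑ᶠ km : (Fin lam.length → ℕ) × (Fin lam.length × Fin lam.length → ℕ),
      if Cnd lam.length (fun a => lam.get a) km then trm lam.length km else 0 := rfl

lemma Cnd_bound (h : Cnd n μ km) :
    (∀ a, km.1 a ≤ ∑ a, μ a) ∧ (∀ p, km.2 p ≤ (∑ a, μ a) * 2 ^ n) := by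
  set R : Fin n → ℕ := fun a => ∑ b, if a < b then km.2 (a, b) else 0 with hR
  set C : Fin n → ℕ := fun a => ∑ c, if c < a then km.2 (c, a) else 0 with hC
  have key : ∀ a, km.1 a + C a = μ a + R a := by
    intro a
    have := h.2 a
    have h1 : (∑ b, if a < b then (km.2 (a, b) : ℤ) else 0) = (R a : ℤ) := by
      simp [hR, apply_ite (Nat.cast : ℕ → ℤ)]
    have h2 : (∑ c, if c < a then (km.2 (c, a) : ℤ) else 0) = (C a : ℤ) := by
      simp [hC, apply_ite (Nat.cast : ℕ → ℤ)]
    rw [h1, h2] at this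
    omega
  have hRC : ∑ a, R a = ∑ a, C a := by
    simp only [hR, hC]
    rw [Finset.sum_comm]
  have hk : ∑ a, km.1 a = ∑ a, μ a := by
    have := Finset.sum_congr rfl (fun a (_ : a ∈ univ) => key a)
    rw [Finset.sum_add_distrib, Finset.sum_add_distrib, hRC] at this
    omega
  have hksingle : ∀ a, km.1 a ≤ ∑ a, μ a := by
    intro a
    rw [← hk]
    exact Finset.single_le_sum (fun _ _ => Nat.zero_le _) (mem_univ a)
  have hmC : ∀ c a : Fin n, c < a → km.2 (c, a) ≤ C a := by
    intro c a hca
    have := Finset.single_le_sum (f := fun c' => if c' < a then km.2 (c', a) else 0)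
      (fun _ _ => Nat.zero_le _) (mem_univ c)
    simpa [hca] using this
  set T : ℕ → ℕ := fun j => ∑ b : Fin n, if j ≤ (b : ℕ) then C b else 0 with hT
  have hRT : ∀ a : Fin n, R a ≤ T ((a : ℕ) + 1) := by
    intro a
    apply Finset.sum_le_sum
    intro b _
    by_cases hab : a < b
    · have : (a : ℕ) + 1 ≤ (b : ℕ) := hab
      simp only [hab, if_true, this, if_true]
      exact hmC a b hab
    · simp [hab]
  have hsplit : ∀ j (hj : j < n), T j = C ⟨j, hj⟩ + T (j + 1) := by
    intro j hj
    have : ∀ b : Fin n, (if j ≤ (b : ℕ) then C b else 0) =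
        (if b = ⟨j, hj⟩ then C b else 0) + (if j + 1 ≤ (b : ℕ) then C b else 0) := by
      intro b
      by_cases hb2 : (b : ℕ) = j
      · have hb : b = ⟨j, hj⟩ := Fin.ext hb2
        subst hb; simp
      · have hb : ¬ b = ⟨j, hj⟩ := fun h => hb2 (by rw [h])
        rw [if_neg hb]
        by_cases h3 : j ≤ (b : ℕ)
        · have h4 : j + 1 ≤ (b : ℕ) := by omega
          simp [h3, h4]
        · have h4 : ¬ (j + 1 ≤ (b : ℕ)) := by omega
          simp [h3, h4]
    rw [hT]
    simp only [this]
    rw [Finset.sum_add_distrib]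
    simp
  have hμsingle : ∀ a : Fin n, μ a ≤ ∑ a, μ a :=
    fun a => Finset.single_le_sum (fun _ _ => Nat.zero_le _) (mem_univ a)
  have main : ∀ d j, n ≤ j + d → T j + ∑ a, μ a ≤ (∑ a, μ a) * 2 ^ d := by
    intro d
    induction d with
    | zero =>
      intro j hj
      have : T j = 0 := by
        apply Finset.sum_eq_zero
        intro b _
        have : ¬ j ≤ (b : ℕ) := by have := b.2; omega
        simp [this]
      simp [this]
    | succ d ih =>
      intro j hj
      have hp : (∑ a, μ a) * 2 ^ (d + 1) = (∑ a, μ a) * 2 ^ d + (∑ a, μ a) * 2 ^ d := by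
        rw [pow_succ]; ring
      by_cases hjn : j < n
      · have hTj := hsplit j hjn
        have hCj : C ⟨j, hjn⟩ ≤ μ ⟨j, hjn⟩ + T (j + 1) := by
          have hk1 := key ⟨j, hjn⟩
          have hk2 : R ⟨j, hjn⟩ ≤ T (j + 1) := hRT ⟨j, hjn⟩
          omega
        have hih := ih (j + 1) (by omega)
        have := hμsingle ⟨j, hjn⟩
        omega
      · have : T j = 0 := by
          apply Finset.sum_eq_zero
          intro b _
          have : ¬ j ≤ (b : ℕ) := by have := b.2; omega
          simp [this]
        have h1 : 1 ≤ 2 ^ (d + 1) := Nat.one_le_two_pow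
        have := Nat.mul_le_mul_left (∑ a, μ a) h1
        omega
  refine ⟨hksingle, fun p => ?_⟩
  by_cases hp : p.1 < p.2
  · have h1 : km.2 p ≤ C p.2 := by have := hmC p.1 p.2 hp; simpa using this
    have h2 : C p.2 ≤ T 0 := by
      have h4 := Finset.single_le_sum (f := fun b : Fin n => if 0 ≤ (b : ℕ) then C b else 0)
        (fun _ _ => Nat.zero_le _) (mem_univ p.2)
      rw [hT]
      simpa using h4
    have h3 := main n 0 (by omega)
    omega
  · have := h.1 p hp
    omega

lemma Fvx_eq_sum (lam : List ℕ) :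
    Fvx lam = ∑ km ∈ ((Fintype.piFinset fun _ : Fin lam.length =>
          range ((∑ a, lam.get a) + 1)) ×ˢ
        (Fintype.piFinset fun _ : Fin lam.length × Fin lam.length =>
          range ((∑ a, lam.get a) * 2 ^ lam.length + 1))).filter
        (fun km => Cnd lam.length (fun a => lam.get a) km),
      trm lam.length km := by
  rw [Fvx_eq', Finset.sum_filter]
  apply finsum_eq_sum_of_support_subset
  intro km hkm
  simp only [Function.mem_support] at hkm
  have hc : Cnd lam.length (fun a => lam.get a) km := by
    by_contra hc
    rw [if_neg hc] at hkm
    exact hkm rfl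
  obtain ⟨h1, h2⟩ := Cnd_bound hc
  simp only [Finset.coe_product, Set.mem_prod, Finset.mem_coe, Fintype.mem_piFinset,
    Finset.mem_range, Nat.lt_succ_iff]
  exact ⟨fun a => h1 a, fun p => h2 p⟩

noncomputable abbrev φF : Fin 3 → MvPolynomial (Fin 3) ℤ :=
  fun i => if i = 1 then X 0 * X 1 else X i

lemma bind_trm (n : ℕ) (km : (Fin n → ℕ) × (Fin n × Fin n → ℕ)) :
    bind₁ φF (trm n km) =
      (∏ i, (X 0 * (X 1 * X 2)) ^ (km.1 i)) *
        ∏ p : Fin n × Fin n, if p.1 < p.2 then cf (km.2 p) else 1 := by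
  rw [trm, map_mul, map_prod, map_prod]
  congr 1
  · refine Finset.prod_congr rfl fun i _ => ?_
    have e1 : φF 1 = X 0 * X 1 := if_pos rfl
    have e2 : φF 2 = X 2 := if_neg (by decide)
    rw [map_pow, map_mul, bind₁_X_right, bind₁_X_right, e1, e2]
    ring
  · refine Finset.prod_congr rfl fun p _ => ?_
    rw [apply_ite (bind₁ φF)]
    by_cases h : p.1 < p.2
    · have e0 : φF 0 = X 0 := if_neg (by decide)
      simp only [h, if_true, cf, apply_ite (bind₁ φF), map_one, map_sub, map_pow,
        bind₁_X_right, e0]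
    · simp [h]

section
variable {l : ℕ}

lemma S1 (m : Fin (l+1) × Fin (l+1) → ℕ) :
    (∑ b, if (0 : Fin (l+1)) < b then (m (0, b) : ℤ) else 0)
      = ∑ b' : Fin l, (m (0, b'.succ) : ℤ) := by
  rw [Fin.sum_univ_succ]
  simp [Fin.succ_pos]

lemma S2 (m : Fin (l+1) × Fin (l+1) → ℕ) :
    (∑ c, if c < (0 : Fin (l+1)) then (m (c, 0) : ℤ) else 0) = 0 := by
  simp

lemma S3 (m : Fin (l+1) × Fin (l+1) → ℕ) (b : Fin l) :
    (∑ c, if b.succ < c then (m (b.succ, c) : ℤ) else 0)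
      = ∑ c' : Fin l, if b < c' then (m (b.succ, c'.succ) : ℤ) else 0 := by
  rw [Fin.sum_univ_succ]
  simp [Fin.succ_lt_succ_iff]

lemma S4 (m : Fin (l+1) × Fin (l+1) → ℕ) (b : Fin l) :
    (∑ c, if c < b.succ then (m (c, b.succ) : ℤ) else 0)
      = (m (0, b.succ) : ℤ) + ∑ c' : Fin l, if c' < b then (m (c'.succ, b.succ) : ℤ) else 0 := by
  rw [Fin.sum_univ_succ]
  simp [Fin.succ_pos, Fin.succ_lt_succ_iff]

def eMap (l : ℕ) (hd : ℕ)
    (x : (_ : (Fin l → ℕ) × (Fin l × Fin l → ℕ)) × (Fin l → ℕ)) :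
    (Fin (l+1) → ℕ) × (Fin (l+1) × Fin (l+1) → ℕ) :=
  (Fin.cons (hd + ∑ b, x.2 b) (fun b => x.1.1 b - x.2 b),
   fun p => Fin.cases (Fin.cases 0 (fun b => x.2 b) p.2)
      (fun i' => Fin.cases 0 (fun j' => x.1.2 (i', j')) p.2) p.1)

def jMap (l : ℕ) (km : (Fin (l+1) → ℕ) × (Fin (l+1) × Fin (l+1) → ℕ)) :
    (_ : (Fin l → ℕ) × (Fin l × Fin l → ℕ)) × (Fin l → ℕ) :=
  ⟨(fun b => km.1 b.succ + km.2 (0, b.succ), fun p => km.2 (p.1.succ, p.2.succ)),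
   fun b => km.2 (0, b.succ)⟩

lemma eMap_m_zero_succ (hd : ℕ) (x) (b : Fin l) :
    (eMap l hd x).2 (0, b.succ) = x.2 b := by
  simp [eMap]

lemma eMap_m_succ_succ (hd : ℕ) (x) (i j : Fin l) :
    (eMap l hd x).2 (i.succ, j.succ) = x.1.2 (i, j) := by
  simp [eMap]

lemma eMap_m_zero_zero (hd : ℕ) (x) :
    (eMap l hd x).2 (0, 0) = 0 := by
  simp [eMap]

lemma eMap_m_succ_zero (hd : ℕ) (x) (i : Fin l) :
    (eMap l hd x).2 (i.succ, 0) = 0 := by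
  simp [eMap]

lemma Cnd_eMap (hd : ℕ) (μ' : Fin l → ℕ)
    (x : (_ : (Fin l → ℕ) × (Fin l × Fin l → ℕ)) × (Fin l → ℕ))
    (hx : Cnd l μ' x.1) (hle : ∀ b, x.2 b ≤ x.1.1 b) :
    Cnd (l+1) (Fin.cons hd μ') (eMap l hd x) := by
  constructor
  · rintro ⟨p1, p2⟩ hp
    induction p1 using Fin.cases with
    | zero =>
      induction p2 using Fin.cases with
      | zero => exact eMap_m_zero_zero hd x
      | succ j => exact absurd (Fin.succ_pos j) hp
    | succ i =>
      induction p2 using Fin.cases with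
      | zero => exact eMap_m_succ_zero hd x i
      | succ j =>
        rw [eMap_m_succ_succ]
        exact hx.1 (i, j) (fun hij => hp (Fin.succ_lt_succ_iff.mpr hij))
  · intro a
    induction a using Fin.cases with
    | zero =>
      rw [S1, S2]
      have h1 : (eMap l hd x).1 0 = hd + ∑ b, x.2 b := by simp [eMap]
      have h2 : ∀ b' : Fin l, (eMap l hd x).2 (0, b'.succ) = x.2 b' :=
        eMap_m_zero_succ hd x
      simp only [h1, h2, Fin.cons_zero]
      push_cast
      ring
    | succ b =>
      rw [S3, S4]
      have h1 : (eMap l hd x).1 b.succ = x.1.1 b - x.2 b := by simp [eMap]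
      have h1' : ((eMap l hd x).1 b.succ : ℤ) = (x.1.1 b : ℤ) - (x.2 b : ℤ) := by
        rw [h1, Nat.cast_sub (hle b)]
      have h2 : ∀ c' : Fin l, (eMap l hd x).2 (b.succ, c'.succ) = x.1.2 (b, c') :=
        fun c' => eMap_m_succ_succ hd x b c'
      have h3 : ∀ c' : Fin l, (eMap l hd x).2 (c'.succ, b.succ) = x.1.2 (c', b) :=
        fun c' => eMap_m_succ_succ hd x c' b
      have h4 := eMap_m_zero_succ hd x b
      have hc := hx.2 b
      simp only [h1', h2, h3, h4, Fin.cons_succ]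
      linarith [hc]

lemma Cnd_jMap (hd : ℕ) (μ' : Fin l → ℕ)
    (km : (Fin (l+1) → ℕ) × (Fin (l+1) × Fin (l+1) → ℕ))
    (h : Cnd (l+1) (Fin.cons hd μ') km) :
    Cnd l μ' (jMap l km).1 := by
  constructor
  · rintro ⟨p1, p2⟩ hp
    exact h.1 (p1.succ, p2.succ) (fun hs => hp (Fin.succ_lt_succ_iff.mp hs))
  · intro b
    have hc := h.2 b.succ
    rw [S3, S4] at hc
    simp only [Fin.cons_succ] at hc
    simp only [jMap]
    push_cast
    linarith [hc]

lemma jMap_eMap (hd : ℕ)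
    (x : (_ : (Fin l → ℕ) × (Fin l × Fin l → ℕ)) × (Fin l → ℕ))
    (hle : ∀ b, x.2 b ≤ x.1.1 b) :
    jMap l (eMap l hd x) = x := by
  obtain ⟨⟨k', m'⟩, m₀⟩ := x
  have h1 : (fun b => (eMap l hd ⟨(k', m'), m₀⟩).1 b.succ
      + (eMap l hd ⟨(k', m'), m₀⟩).2 (0, b.succ)) = k' := by
    funext b
    simp only [eMap, Fin.cons_succ, Fin.cases_succ, Fin.cases_zero]
    exact Nat.sub_add_cancel (hle b)
  have h2 : (fun p : Fin l × Fin l =>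
      (eMap l hd ⟨(k', m'), m₀⟩).2 (p.1.succ, p.2.succ)) = m' := by
    funext p
    simp [eMap]
  have h3 : (fun b : Fin l => (eMap l hd ⟨(k', m'), m₀⟩).2 (0, b.succ)) = m₀ := by
    funext b
    simp [eMap]
  simp only [jMap, h1, h2, h3]

lemma eMap_jMap (hd : ℕ) (μ' : Fin l → ℕ)
    (km : (Fin (l+1) → ℕ) × (Fin (l+1) × Fin (l+1) → ℕ))
    (h : Cnd (l+1) (Fin.cons hd μ') km) :
    eMap l hd (jMap l km) = km := by
  have hk0 : km.1 0 = hd + ∑ b : Fin l, km.2 (0, b.succ) := by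
    have hc := h.2 0
    rw [S1, S2] at hc
    simp only [Fin.cons_zero] at hc
    have : (km.1 0 : ℤ) = (hd : ℤ) + ∑ b' : Fin l, (km.2 (0, b'.succ) : ℤ) := by linarith
    exact_mod_cast this
  refine Prod.ext ?_ ?_
  · funext a
    induction a using Fin.cases with
    | zero =>
      simp only [eMap, jMap, Fin.cons_zero]
      exact hk0.symm
    | succ b =>
      simp only [eMap, jMap, Fin.cons_succ]
      omega
  · funext p
    obtain ⟨p1, p2⟩ := p
    induction p1 using Fin.cases with
    | zero =>
      induction p2 using Fin.cases with
      | zero => rw [eMap_m_zero_zero, h.1 (0, 0) (by simp)]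
      | succ j => rw [eMap_m_zero_succ]; rfl
    | succ i =>
      induction p2 using Fin.cases with
      | zero => rw [eMap_m_succ_zero, h.1 (i.succ, 0) (by simp)]
      | succ j => rw [eMap_m_succ_succ]; rfl

end
lemma trm_eMap {l : ℕ} (hd : ℕ)
    (x : (_ : (Fin l → ℕ) × (Fin l × Fin l → ℕ)) × (Fin l → ℕ))
    (hle : ∀ b, x.2 b ≤ x.1.1 b) :
    trm (l+1) (eMap l hd x) =
      (X 1 * X 2) ^ hd * ((∏ i, (X 1 * X 2) ^ (x.1.1 i)) * (∏ b, cf (x.2 b)) *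
        ∏ p : Fin l × Fin l, if p.1 < p.2 then cf (x.1.2 p) else 1) := by
  obtain ⟨⟨k', m'⟩, m₀⟩ := x
  have hsum : ∑ i, (eMap l hd ⟨(k', m'), m₀⟩).1 i = hd + ∑ i, k' i := by
    rw [Fin.sum_univ_succ]
    simp only [eMap, Fin.cons_zero, Fin.cons_succ]
    have h5 : (∑ b, (k' b - m₀ b)) + ∑ b, m₀ b = ∑ b, k' b := by
      rw [← Finset.sum_add_distrib]
      exact Finset.sum_congr rfl fun b _ => Nat.sub_add_cancel (hle b)
    omega
  have hprod2 : (∏ p : Fin (l+1) × Fin (l+1),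
        if p.1 < p.2 then cf ((eMap l hd ⟨(k', m'), m₀⟩).2 p) else 1)
      = (∏ b, cf (m₀ b)) * ∏ p : Fin l × Fin l, if p.1 < p.2 then cf (m' p) else 1 := by
    rw [Fintype.prod_prod_type, Fin.prod_univ_succ]
    congr 1
    · rw [Fin.prod_univ_succ]
      simp [eMap, Fin.succ_pos]
    · rw [Fintype.prod_prod_type (fun p : Fin l × Fin l =>
        if p.1 < p.2 then cf (m' p) else 1)]
      refine Finset.prod_congr rfl fun i' _ => ?_
      rw [Fin.prod_univ_succ]
      simp [eMap, Fin.succ_lt_succ_iff]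
  rw [trm, Finset.prod_pow_eq_pow_sum, hsum, pow_add, hprod2,
    ← Finset.prod_pow_eq_pow_sum]
  ring

noncomputable def G (l hd : ℕ)
    (x : (_ : (Fin l → ℕ) × (Fin l × Fin l → ℕ)) × (Fin l → ℕ)) :
    MvPolynomial (Fin 3) ℤ :=
  (X 1 * X 2) ^ hd * ((∏ i, (X 1 * X 2) ^ (x.1.1 i)) * (∏ b, cf (x.2 b)) *
    ∏ p : Fin l × Fin l, if p.1 < p.2 then cf (x.1.2 p) else 1)

lemma trm_eMap_G {l : ℕ} (hd : ℕ)
    (x : (_ : (Fin l → ℕ) × (Fin l × Fin l → ℕ)) × (Fin l → ℕ))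
    (hle : ∀ b, x.2 b ≤ x.1.1 b) :
    trm (l+1) (eMap l hd x) = G l hd x := trm_eMap hd x hle

lemma mem_filt (lam : List ℕ)
    (km : (Fin lam.length → ℕ) × (Fin lam.length × Fin lam.length → ℕ)) :
    km ∈ ((Fintype.piFinset fun _ : Fin lam.length => range ((∑ a, lam.get a) + 1)) ×ˢ
        (Fintype.piFinset fun _ : Fin lam.length × Fin lam.length =>
          range ((∑ a, lam.get a) * 2 ^ lam.length + 1))).filter
        (fun km => Cnd lam.length (fun a => lam.get a) km) ↔
      Cnd lam.length (fun a => lam.get a) km := by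
  constructor
  · exact fun h => (Finset.mem_filter.mp h).2
  · intro h
    obtain ⟨h1, h2⟩ := Cnd_bound h
    refine Finset.mem_filter.mpr ⟨?_, h⟩
    simp only [Finset.mem_product, Fintype.mem_piFinset, Finset.mem_range, Nat.lt_succ_iff]
    exact ⟨fun a => h1 a, fun p => h2 p⟩

/-- The recursion `𝔉_{(λ₁,…,λ_l)}(u) = (ux)^{λ₁} · 𝔉_{(λ₂,…,λ_l)}(tu)` in `ℤ[t, u, x]`,
for every partition `λ` of length `l ≥ 1`; the substitution `u ↦ tu` is performed
by `MvPolynomial.bind₁`. -/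
theorem Fvx_recursion (lam : List ℕ) (h0 : lam ≠ [])
    (h1 : lam.Pairwise (· ≥ ·)) (h2 : ∀ x ∈ lam, 0 < x) :
    Fvx lam =
      (MvPolynomial.X 1 * MvPolynomial.X 2) ^ lam.headI *
        MvPolynomial.bind₁
          (fun i : Fin 3 =>
            if i = 1 then MvPolynomial.X 0 * MvPolynomial.X 1 else MvPolynomial.X i)
          (Fvx lam.tail) := by
  clear h1 h2
  rcases lam with _ | ⟨hd, tl⟩
  · exact absurd rfl h0
  clear h0
  have hμ : (fun a : Fin (hd :: tl).length => (hd :: tl).get a)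
      = Fin.cons hd (fun b => tl.get b) := by
    funext a
    induction a using Fin.cases with
    | zero => rfl
    | succ b => simp
  simp only [List.headI_cons, List.tail_cons]
  rw [Fvx_eq_sum (hd :: tl), Fvx_eq_sum tl, map_sum, Finset.mul_sum]
  have hterm : ∀ km' ∈ ((Fintype.piFinset fun _ : Fin tl.length =>
          range ((∑ a, tl.get a) + 1)) ×ˢ
        (Fintype.piFinset fun _ : Fin tl.length × Fin tl.length =>
          range ((∑ a, tl.get a) * 2 ^ tl.length + 1))).filter
        (fun km => Cnd tl.length (fun a => tl.get a) km),
      (X 1 * X 2 : MvPolynomial (Fin 3) ℤ) ^ hd * (bind₁ φF) (trm tl.length km')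
        = ∑ m₀ ∈ Fintype.piFinset (fun b => range (km'.1 b + 1)), G tl.length hd ⟨km', m₀⟩ := by
    intro km' _
    rw [bind_trm]
    have ha : (∏ i, (X 0 * (X 1 * X 2) : MvPolynomial (Fin 3) ℤ) ^ (km'.1 i))
        = (∏ i, ((X 1 * X 2 : MvPolynomial (Fin 3) ℤ)) ^ (km'.1 i)) *
          ∏ i, (X 0 : MvPolynomial (Fin 3) ℤ) ^ (km'.1 i) := by
      rw [← Finset.prod_mul_distrib]
      exact Finset.prod_congr rfl fun i _ => by ring
    have hb : (∏ i, (X 0 : MvPolynomial (Fin 3) ℤ) ^ (km'.1 i))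
        = ∏ i, ∑ j ∈ range (km'.1 i + 1), cf j :=
      Finset.prod_congr rfl fun i _ => (cf_sum _).symm
    rw [ha, hb, Finset.prod_univ_sum]
    simp only [Finset.mul_sum, Finset.sum_mul]
    exact Finset.sum_congr rfl fun m₀ _ => by rw [G]
  rw [Finset.sum_congr rfl hterm, ← Finset.sum_sigma]
  refine Finset.sum_nbij' (jMap tl.length) (eMap tl.length hd) ?_ ?_ ?_ ?_ ?_
  · intro km hkm
    have hc : Cnd (tl.length + 1) (Fin.cons hd (fun b => tl.get b)) km := by
      have hh := (mem_filt (hd :: tl) km).mp hkm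
      rwa [hμ] at hh
    rw [Finset.mem_sigma]
    constructor
    · exact (mem_filt tl _).mpr (Cnd_jMap hd _ km hc)
    · simp only [Fintype.mem_piFinset, Finset.mem_range, Nat.lt_succ_iff, jMap]
      intro b
      exact Nat.le_add_left _ _
  · intro x hx
    rw [Finset.mem_sigma] at hx
    have hc' : Cnd tl.length (fun b => tl.get b) x.1 := (mem_filt tl _).mp hx.1
    have hle : ∀ b, x.2 b ≤ x.1.1 b := by
      have hh := hx.2
      simp only [Fintype.mem_piFinset, Finset.mem_range, Nat.lt_succ_iff] at hh
      exact hh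
    refine (mem_filt (hd :: tl) _).mpr ?_
    rw [hμ]
    exact Cnd_eMap hd _ x hc' hle
  · intro km hkm
    have hc : Cnd (tl.length + 1) (Fin.cons hd (fun b => tl.get b)) km := by
      have hh := (mem_filt (hd :: tl) km).mp hkm
      rwa [hμ] at hh
    exact eMap_jMap hd _ km hc
  · intro x hx
    rw [Finset.mem_sigma] at hx
    have hle : ∀ b, x.2 b ≤ x.1.1 b := by
      have hh := hx.2
      simp only [Fintype.mem_piFinset, Finset.mem_range, Nat.lt_succ_iff] at hh
      exact hh
    exact jMap_eMap hd x hle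
  · intro km hkm
    have hc : Cnd (tl.length + 1) (Fin.cons hd (fun b => tl.get b)) km := by
      have hh := (mem_filt (hd :: tl) km).mp hkm
      rwa [hμ] at hh
    conv_lhs => rw [← eMap_jMap hd (fun b => tl.get b) km hc]
    exact trm_eMap_G hd (jMap tl.length km) (fun b => Nat.le_add_left _ _)
end

section
/- For every partition μ = (μ₁, …, μ_m) of length m, 𝔊_μ(u) = ∏_{i=1}^{m} (1 − u/(v t^{i−1})) · (t^{i}/(u x))^{μᵢ} as elements of ℚ(t, u, v, x). Equivalently, 𝔊 satisfies the recursion 𝔊_{(μ₁,…,μ_m)}(u) = (1 − u/v) · (t/(ux))^{μ₁} · 𝔊_{(μ₂,…,μ_m)}(u/t), with 𝔊 of the empty partition equal to 1. -/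
open Finset

noncomputable section

/-- The field `ℚ(t, u, v, x)` of rational functions in four variables over `ℚ`. -/
abbrev K4 : Type := FractionRing (MvPolynomial (Fin 4) ℚ)

/-- The variable `t` of `ℚ(t, u, v, x)`. -/
def tv : K4 := algebraMap (MvPolynomial (Fin 4) ℚ) K4 (MvPolynomial.X 0)

/-- The variable `u` of `ℚ(t, u, v, x)`. -/
def uv : K4 := algebraMap (MvPolynomial (Fin 4) ℚ) K4 (MvPolynomial.X 1)

/-- The variable `v` of `ℚ(t, u, v, x)`. -/
def vv : K4 := algebraMap (MvPolynomial (Fin 4) ℚ) K4 (MvPolynomial.X 2)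

/-- The variable `x` of `ℚ(t, u, v, x)`. -/
def xv : K4 := algebraMap (MvPolynomial (Fin 4) ℚ) K4 (MvPolynomial.X 3)

/-- The coefficient of `zᵢ^k` in `(1 − (t/(vx)) zᵢ)(Σ_{k≥0} (t/(uE·x))^k zᵢ^k)`:
`1` for `k = 0`, and `(t/(uE·x))^k − (t/(vx))(t/(uE·x))^{k−1}` for `k ≥ 1`. -/
def gcoef (uE : K4) (k : ℕ) : K4 :=
  if k = 0 then 1
  else (tv / (uE * xv)) ^ k - tv / (vv * xv) * (tv / (uE * xv)) ^ (k - 1)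

/-- `𝔊_μ(uE) ∈ ℚ(t, u, v, x)` (for a parameter `uE` substituted for `u`): the coefficient of
`z₁^{μ₁} ⋯ z_m^{μ_m}` in the formal product
`∏_{1≤i<j≤m} (1 − z_j/zᵢ)(Σ_{k≥0} t^k (z_j/zᵢ)^k)
  · ∏_{i=1}^{m} (1 − (t/(vx)) zᵢ)(Σ_{k≥0} (t/(uE·x))^k zᵢ^k)`.
It is computed by expanding the product: `km.1 i` is the exponent of `zᵢ` chosen from the
`i`-th factor, with coefficient `gcoef uE`, and for a pair `p = (i,j)` with `i < j`,
`km.2 p` is the exponent of the ratio `z_j/zᵢ`, with coefficient `1` for exponent `0` and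
`t^k − t^{k−1}` for exponent `k ≥ 1`.  The condition matches the exponent of each `zᵢ`
with `μᵢ`.  Only finitely many terms contribute, so the `finsum` is the honest
coefficient. -/
def Gvx (uE : K4) (mu : List ℕ) : K4 :=
  ∑ᶠ km : (Fin mu.length → ℕ) × (Fin mu.length × Fin mu.length → ℕ),
    if (∀ p : Fin mu.length × Fin mu.length, ¬ p.1 < p.2 → km.2 p = 0) ∧
        (∀ a : Fin mu.length,
          (km.1 a : ℤ) + (∑ c, if c < a then (km.2 (c, a) : ℤ) else 0)
            - (∑ b, if a < b then (km.2 (a, b) : ℤ) else 0) = (mu.get a : ℤ))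
      then (∏ i : Fin mu.length, gcoef uE (km.1 i)) *
        ∏ p : Fin mu.length × Fin mu.length,
          (if p.1 < p.2 then
            (if km.2 p = 0 then 1 else tv ^ (km.2 p) - tv ^ (km.2 p - 1)) else 1)
      else 0

namespace GvxAux

/-- index type -/
abbrev Idx (m : ℕ) : Type := (Fin m → ℕ) × (Fin m × Fin m → ℕ)

def Cond (mu : List ℕ) (km : Idx mu.length) : Prop :=
  (∀ p : Fin mu.length × Fin mu.length, ¬ p.1 < p.2 → km.2 p = 0) ∧
  (∀ a : Fin mu.length,
    (km.1 a : ℤ) + (∑ c, if c < a then (km.2 (c, a) : ℤ) else 0)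
      - (∑ b, if a < b then (km.2 (a, b) : ℤ) else 0) = (mu.get a : ℤ))

def rr (k : ℕ) : K4 := if k = 0 then 1 else tv ^ k - tv ^ (k - 1)

def wt (uE : K4) (m : ℕ) (km : Idx m) : K4 :=
  (∏ i, gcoef uE (km.1 i)) *
    ∏ p : Fin m × Fin m, (if p.1 < p.2 then rr (km.2 p) else 1)

open Classical in
def F (uE : K4) (mu : List ℕ) (km : Idx mu.length) : K4 :=
  if Cond mu km then wt uE mu.length km else 0

lemma Gvx_eq_finsum (uE : K4) (mu : List ℕ) : Gvx uE mu = ∑ᶠ km, F uE mu km := by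
  unfold Gvx F Cond wt rr
  exact finsum_congr fun km => by split_ifs <;> rfl

lemma algMap_inj : Function.Injective (algebraMap (MvPolynomial (Fin 4) ℚ) K4) :=
  IsFractionRing.injective _ _

lemma X_ne (i : Fin 4) : algebraMap (MvPolynomial (Fin 4) ℚ) K4 (MvPolynomial.X i) ≠ 0 := by
  rw [Ne, map_eq_zero_iff _ algMap_inj]
  exact MvPolynomial.X_ne_zero i

lemma tv_ne : tv ≠ 0 := X_ne 0
lemma uv_ne : uv ≠ 0 := X_ne 1
lemma vv_ne : vv ≠ 0 := X_ne 2
lemma xv_ne : xv ≠ 0 := X_ne 3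

lemma key (uE : K4) (hE : uE ≠ 0) : uE / vv * (tv / (uE * xv)) = tv / (vv * xv) := by
  have h : uE / vv * (tv / (uE * xv)) = uE / uE * (tv / (vv * xv)) := by ring
  rw [h, div_self hE, one_mul]

lemma gcoef_zero (uE : K4) : gcoef uE 0 = 1 := by simp [gcoef]

lemma gcoef_pos (uE : K4) (hE : uE ≠ 0) (k : ℕ) (hk : k ≠ 0) :
    gcoef uE k = (1 - uE / vv) * (tv / (uE * xv)) ^ k := by
  unfold gcoef
  rw [if_neg hk]
  obtain ⟨j, rfl⟩ := Nat.exists_eq_succ_of_ne_zero hk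
  rw [Nat.succ_sub_one, ← key uE hE, pow_succ]
  ring

lemma rr_sum (n : ℕ) : ∑ b ∈ range (n + 1), rr b = tv ^ n := by
  induction n with
  | zero => simp [rr]
  | succ n ih =>
      rw [Finset.sum_range_succ, ih, rr, if_neg (Nat.succ_ne_zero n), Nat.succ_sub_one]
      ring

lemma conv (uE : K4) (hE : uE ≠ 0) (n : ℕ) :
    ∑ b ∈ range (n + 1), gcoef uE (n - b) * (tv / (uE * xv)) ^ b * rr b
      = gcoef (uE / tv) n := by
  have hs' : tv / (uE / tv * xv) = tv * (tv / (uE * xv)) := by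
    field_simp
  cases n with
  | zero => simp [gcoef, rr]
  | succ N =>
      rw [Finset.sum_range_succ]
      have h1 : ∀ b ∈ range (N + 1),
          gcoef uE (N + 1 - b) * (tv / (uE * xv)) ^ b * rr b
            = ((1 - uE / vv) * (tv / (uE * xv)) ^ (N + 1)) * rr b := by
        intro b hb
        rw [Finset.mem_range] at hb
        have hb' : b ≤ N + 1 := by omega
        rw [gcoef_pos uE hE _ (by omega)]
        rw [mul_assoc (1 - uE / vv), ← pow_add, Nat.sub_add_cancel hb']
      rw [Finset.sum_congr rfl h1, ← Finset.mul_sum, rr_sum]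
      rw [Nat.sub_self, gcoef_zero, rr, if_neg (Nat.succ_ne_zero N), Nat.succ_sub_one]
      rw [gcoef, if_neg (Nat.succ_ne_zero N), Nat.succ_sub_one, hs', ← key uE hE]
      ring

lemma conv_ext (uE : K4) (hE : uE ≠ 0) {n N : ℕ} (hn : n ≤ N) :
    gcoef (uE / tv) n
      = ∑ b ∈ range (N + 1),
          if b ≤ n then gcoef uE (n - b) * (tv / (uE * xv)) ^ b * rr b else 0 := by
  rw [← conv uE hE n]
  rw [← Finset.sum_subset (Finset.range_subset_range.2 (by omega) :
      range (n + 1) ⊆ range (N + 1))]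
  · apply Finset.sum_congr rfl
    intro b hb
    rw [Finset.mem_range] at hb
    rw [if_pos (by omega)]
  · intro b _ hb
    rw [Finset.mem_range] at hb
    rw [if_neg (by omega)]

lemma cond_total (mu : List ℕ) {km : Idx mu.length} (h : Cond mu km) :
    ∑ a, (km.1 a : ℤ) = (mu.sum : ℤ) := by
  have h0 : ∑ a, ((km.1 a : ℤ) + (∑ c, if c < a then (km.2 (c, a) : ℤ) else 0)
      - (∑ b, if a < b then (km.2 (a, b) : ℤ) else 0)) = ∑ a, (mu.get a : ℤ) :=
    Finset.sum_congr rfl fun a _ => h.2 a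
  have hswap : ∑ a : Fin mu.length, (∑ b, if a < b then (km.2 (a, b) : ℤ) else 0)
      = ∑ a : Fin mu.length, (∑ c, if c < a then (km.2 (c, a) : ℤ) else 0) :=
    Finset.sum_comm
  rw [Finset.sum_sub_distrib, Finset.sum_add_distrib, hswap, add_sub_cancel_right] at h0
  rw [h0]
  have : ∀ a : Fin mu.length, (mu.get a : ℤ) = ((mu.get a : ℕ) : ℤ) := fun a => rfl
  rw [← Nat.cast_sum]
  congr 1
  simpa using (List.sum_univ_get? mu)

lemma cond_partial (mu : List ℕ) {km : Idx mu.length} (h : Cond mu km)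
    (j : Fin mu.length) :
    (∑ a ∈ univ.filter fun a => j ≤ a, (km.1 a : ℤ))
      + ∑ p : Fin mu.length × Fin mu.length,
          (if p.1 < j ∧ j ≤ p.2 ∧ p.1 < p.2 then (km.2 p : ℤ) else 0)
      = ∑ a ∈ univ.filter fun a => j ≤ a, (mu.get a : ℤ) := by
  classical
  have h0 : ∑ a ∈ univ.filter (fun a => j ≤ a),
      ((km.1 a : ℤ) + (∑ c, if c < a then (km.2 (c, a) : ℤ) else 0)
        - (∑ b, if a < b then (km.2 (a, b) : ℤ) else 0))
      = ∑ a ∈ univ.filter (fun a => j ≤ a), (mu.get a : ℤ) :=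
    Finset.sum_congr rfl fun a _ => h.2 a
  have hX : ∑ a ∈ univ.filter (fun a => j ≤ a),
      (∑ c, if c < a then (km.2 (c, a) : ℤ) else 0)
      = ∑ p : Fin mu.length × Fin mu.length,
          (if j ≤ p.2 ∧ p.1 < p.2 then (km.2 p : ℤ) else 0) := by
    rw [Finset.sum_filter, Fintype.sum_prod_type, Finset.sum_comm]
    apply Finset.sum_congr rfl
    intro a _
    by_cases hj : j ≤ a
    · rw [if_pos hj]
      apply Finset.sum_congr rfl
      intro c _
      by_cases hc : c < a <;> simp [hc, hj]
    · rw [if_neg hj]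
      symm
      apply Finset.sum_eq_zero
      intro c _
      simp [hj]
  have hY : ∑ a ∈ univ.filter (fun a => j ≤ a),
      (∑ b, if a < b then (km.2 (a, b) : ℤ) else 0)
      = ∑ p : Fin mu.length × Fin mu.length,
          (if j ≤ p.1 ∧ p.1 < p.2 then (km.2 p : ℤ) else 0) := by
    rw [Finset.sum_filter, Fintype.sum_prod_type]
    apply Finset.sum_congr rfl
    intro a _
    by_cases hj : j ≤ a
    · rw [if_pos hj]
      apply Finset.sum_congr rfl
      intro b _
      by_cases hc : a < b <;> simp [hc, hj]
    · rw [if_neg hj]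
      symm
      apply Finset.sum_eq_zero
      intro b _
      simp [hj]
  have hpoint : ∀ p : Fin mu.length × Fin mu.length,
      (if j ≤ p.2 ∧ p.1 < p.2 then (km.2 p : ℤ) else 0)
      = (if j ≤ p.1 ∧ p.1 < p.2 then (km.2 p : ℤ) else 0)
        + (if p.1 < j ∧ j ≤ p.2 ∧ p.1 < p.2 then (km.2 p : ℤ) else 0) := by
    intro p
    rcases le_or_gt j p.1 with hj | hj
    · rw [if_neg (show ¬(p.1 < j ∧ j ≤ p.2 ∧ p.1 < p.2) from
          fun hc => absurd hc.1 (not_lt.2 hj)), add_zero]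
      apply if_congr _ rfl rfl
      constructor
      · rintro ⟨-, h2⟩; exact ⟨hj, h2⟩
      · rintro ⟨h1, h2⟩; exact ⟨le_of_lt (lt_of_le_of_lt h1 h2), h2⟩
    · rw [if_neg (show ¬(j ≤ p.1 ∧ p.1 < p.2) from
          fun hc => absurd hc.1 (not_le.2 hj)), zero_add]
      apply if_congr _ rfl rfl
      constructor
      · rintro ⟨h1, h2⟩; exact ⟨hj, h1, h2⟩
      · rintro ⟨-, h1, h2⟩; exact ⟨h1, h2⟩
  have hZ : ∑ p : Fin mu.length × Fin mu.length,
      (if j ≤ p.2 ∧ p.1 < p.2 then (km.2 p : ℤ) else 0)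
      = (∑ p : Fin mu.length × Fin mu.length,
          (if j ≤ p.1 ∧ p.1 < p.2 then (km.2 p : ℤ) else 0))
        + ∑ p : Fin mu.length × Fin mu.length,
          (if p.1 < j ∧ j ≤ p.2 ∧ p.1 < p.2 then (km.2 p : ℤ) else 0) := by
    rw [← Finset.sum_add_distrib]
    exact Finset.sum_congr rfl fun p _ => hpoint p
  rw [Finset.sum_sub_distrib, Finset.sum_add_distrib, hX, hY, hZ] at h0
  linarith [h0]

lemma cond_n_le (mu : List ℕ) {km : Idx mu.length} (h : Cond mu km) (a : Fin mu.length) :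
    km.1 a ≤ mu.sum := by
  have h1 := cond_total mu h
  have h2 : (km.1 a : ℤ) ≤ ∑ a, (km.1 a : ℤ) :=
    Finset.single_le_sum (fun i _ => Int.natCast_nonneg _) (Finset.mem_univ a)
  rw [h1] at h2
  exact_mod_cast h2

lemma sum_get_le (mu : List ℕ) (s : Finset (Fin mu.length)) :
    ∑ a ∈ s, (mu.get a : ℤ) ≤ (mu.sum : ℤ) := by
  have h1 : ∑ a ∈ s, (mu.get a : ℤ) ≤ ∑ a : Fin mu.length, (mu.get a : ℤ) :=
    Finset.sum_le_sum_of_subset_of_nonneg (Finset.subset_univ s)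
      (fun i _ _ => Int.natCast_nonneg _)
  refine h1.trans ?_
  rw [← Nat.cast_sum]
  exact_mod_cast le_of_eq (by simpa using (List.sum_univ_get? mu))

lemma cond_k_le (mu : List ℕ) {km : Idx mu.length} (h : Cond mu km)
    (p : Fin mu.length × Fin mu.length) : km.2 p ≤ mu.sum := by
  by_cases hp : p.1 < p.2
  · have h1 := cond_partial mu h p.2
    have h2 : (km.2 p : ℤ) ≤ ∑ q : Fin mu.length × Fin mu.length,
        (if q.1 < p.2 ∧ p.2 ≤ q.2 ∧ q.1 < q.2 then (km.2 q : ℤ) else 0) := by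
      have := Finset.single_le_sum
        (f := fun q : Fin mu.length × Fin mu.length =>
          (if q.1 < p.2 ∧ p.2 ≤ q.2 ∧ q.1 < q.2 then (km.2 q : ℤ) else 0))
        (fun q _ => by positivity) (Finset.mem_univ p)
      rwa [if_pos (⟨hp, le_refl _, hp⟩ : p.1 < p.2 ∧ p.2 ≤ p.2 ∧ p.1 < p.2)] at this
    have h3 : (0 : ℤ) ≤ ∑ a ∈ univ.filter fun a => p.2 ≤ a, (km.1 a : ℤ) :=
      Finset.sum_nonneg fun i _ => Int.natCast_nonneg _
    have h4 := sum_get_le mu (univ.filter fun a => p.2 ≤ a)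
    have : (km.2 p : ℤ) ≤ (mu.sum : ℤ) := by linarith
    exact_mod_cast this
  · rw [h.1 p hp]
    exact Nat.zero_le _

def SB (m N : ℕ) : Finset (Idx m) :=
  (Fintype.piFinset fun _ => range (N + 1)) ×ˢ (Fintype.piFinset fun _ => range (N + 1))

lemma mem_SB {m N : ℕ} {km : Idx m} :
    km ∈ SB m N ↔ (∀ i, km.1 i ≤ N) ∧ (∀ p, km.2 p ≤ N) := by
  simp [SB, Fintype.mem_piFinset, Nat.lt_succ_iff]

lemma Gvx_finset (uE : K4) (mu : List ℕ) (N : ℕ) (hN : mu.sum ≤ N) :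
    Gvx uE mu = ∑ km ∈ SB mu.length N, F uE mu km := by
  rw [Gvx_eq_finsum]
  apply finsum_eq_sum_of_support_subset
  intro km hkm
  have hc : Cond mu km := by
    by_contra hc
    apply hkm
    simp only [F, if_neg hc]
  refine mem_SB.2 ⟨fun i => le_trans (cond_n_le mu hc i) hN,
    fun p => le_trans (cond_k_le mu hc p) hN⟩

lemma Gvx_nil (uE : K4) : Gvx uE [] = 1 := by
  rw [Gvx_eq_finsum]
  haveI : IsEmpty (Fin ([] : List ℕ).length) := ⟨fun i => Fin.elim0 i⟩
  haveI : IsEmpty (Fin ([] : List ℕ).length × Fin ([] : List ℕ).length) :=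
    ⟨fun p => Fin.elim0 p.1⟩
  have : ∀ km : Idx ([] : List ℕ).length, F uE [] km = 1 := by
    intro km
    have hc : Cond [] km := ⟨fun p => Fin.elim0 p.1, fun a => Fin.elim0 a⟩
    simp only [F, if_pos hc, wt]
    rw [Finset.univ_eq_empty, Finset.prod_empty]
    rw [show (Finset.univ : Finset (Fin ([] : List ℕ).length × Fin ([] : List ℕ).length))
      = ∅ from Finset.univ_eq_empty, Finset.prod_empty, one_mul]
  rw [finsum_congr this]
  have : (Function.support fun _ : Idx ([] : List ℕ).length => (1 : K4)) ⊆
      ↑({(fun _ => 0, fun _ => 0)} : Finset (Idx ([] : List ℕ).length)) := by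
    intro km _
    simp only [Finset.coe_singleton, Set.mem_singleton_iff]
    refine Prod.ext (funext fun i => Fin.elim0 i) (funext fun p => Fin.elim0 p.1)
  rw [finsum_eq_sum_of_support_subset _ this, Finset.sum_singleton]

def Pin (m : ℕ) (kin : Fin m × Fin m → ℕ) : K4 :=
  ∏ p : Fin m × Fin m, (if p.1 < p.2 then rr (kin p) else 1)

def phi (m : ℕ) (km : Idx (m + 1)) : (Fin m → ℕ) × Idx m :=
  (fun j => km.2 (0, j.succ),
   (fun j => km.1 j.succ + km.2 (0, j.succ), fun p => km.2 (p.1.succ, p.2.succ)))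

def psi (m : ℕ) (a : ℕ) (q : (Fin m → ℕ) × Idx m) : Idx (m + 1) :=
  (Fin.cons (a + ∑ j, q.1 j) (fun j => q.2.1 j - q.1 j),
   fun p => Fin.cases (Fin.cases 0 (fun j => q.1 j) p.2)
     (fun i => Fin.cases 0 (fun j => q.2.2 (i, j)) p.2) p.1)

lemma psi_two_zero_zero (m a : ℕ) (q : (Fin m → ℕ) × Idx m) :
    (psi m a q).2 (0, 0) = 0 := rfl

lemma psi_two_zero_succ (m a : ℕ) (q : (Fin m → ℕ) × Idx m) (j : Fin m) :
    (psi m a q).2 (0, j.succ) = q.1 j := by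
  simp [psi]

lemma psi_two_succ_zero (m a : ℕ) (q : (Fin m → ℕ) × Idx m) (i : Fin m) :
    (psi m a q).2 (i.succ, 0) = 0 := by
  simp [psi]

lemma psi_two_succ_succ (m a : ℕ) (q : (Fin m → ℕ) × Idx m) (i j : Fin m) :
    (psi m a q).2 (i.succ, j.succ) = q.2.2 (i, j) := by
  simp [psi]

lemma cond_cons_1 {a : ℕ} {l : List ℕ} {km : Idx (l.length + 1)}
    (h : Cond (a :: l) km) :
    Cond l (phi l.length km).2 ∧ km.1 0 = a + ∑ j : Fin l.length, km.2 (0, j.succ) := by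
  have h1 : ∀ p : Fin (l.length + 1) × Fin (l.length + 1), ¬ p.1 < p.2 → km.2 p = 0 := h.1
  have h2 : ∀ c : Fin (l.length + 1),
      (km.1 c : ℤ) + (∑ x : Fin (l.length + 1), if x < c then (km.2 (x, c) : ℤ) else 0)
        - (∑ x : Fin (l.length + 1), if c < x then (km.2 (c, x) : ℤ) else 0)
        = ((a :: l).get c : ℤ) := h.2
  constructor
  · constructor
    · intro p hp
      exact h1 (p.1.succ, p.2.succ) (by simpa [Fin.succ_lt_succ_iff] using hp)
    · intro j
      have hc := h2 j.succ
      rw [Fin.sum_univ_succ (f := fun x : Fin (l.length + 1) =>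
            if x < j.succ then (km.2 (x, j.succ) : ℤ) else 0),
          Fin.sum_univ_succ (f := fun x : Fin (l.length + 1) =>
            if j.succ < x then (km.2 (j.succ, x) : ℤ) else 0)] at hc
      simp only [if_pos (Fin.succ_pos j), if_neg (Fin.not_lt_zero _),
        Fin.succ_lt_succ_iff, List.get_eq_getElem, Fin.val_succ, List.getElem_cons_succ, zero_add] at hc
      simp only [phi]
      push_cast
      have hget : (l.get j : ℤ) = (l[(j : ℕ)] : ℤ) := by rw [List.get_eq_getElem]
      linarith [hc, hget]
  · have hc := h2 0
    rw [Fin.sum_univ_succ (f := fun x : Fin (l.length + 1) =>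
          if x < 0 then (km.2 (x, 0) : ℤ) else 0),
        Fin.sum_univ_succ (f := fun x : Fin (l.length + 1) =>
          if (0 : Fin (l.length + 1)) < x then (km.2 (0, x) : ℤ) else 0)] at hc
    simp only [if_neg (lt_irrefl (0 : Fin (l.length + 1))),
      if_neg (Fin.not_lt_zero _), if_pos (Fin.succ_pos _), List.get_cons_zero,
      zero_add, Finset.sum_const_zero, add_zero] at hc
    have h3 : (km.1 0 : ℤ) = ((a + ∑ j : Fin l.length, km.2 (0, j.succ) : ℕ) : ℤ) := by
      push_cast
      linarith [hc]
    exact_mod_cast h3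

lemma cond_cons_2 (a : ℕ) (l : List ℕ) (q : (Fin l.length → ℕ) × Idx l.length)
    (hq : Cond l q.2) (hb : ∀ j, q.1 j ≤ q.2.1 j) :
    Cond (a :: l) (psi l.length a q) := by
  have part1 : ∀ p : Fin (l.length + 1) × Fin (l.length + 1),
      ¬ p.1 < p.2 → (psi l.length a q).2 p = 0 := by
    rintro ⟨p1, p2⟩ hp
    induction p1 using Fin.cases with
    | zero =>
        induction p2 using Fin.cases with
        | zero => exact psi_two_zero_zero _ _ _
        | succ j => exact absurd (Fin.succ_pos j) hp
    | succ i =>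
        induction p2 using Fin.cases with
        | zero => exact psi_two_succ_zero _ _ _ _
        | succ j =>
            rw [psi_two_succ_succ]
            exact hq.1 (i, j) fun hij => hp (Fin.succ_lt_succ_iff.mpr hij)
  have part2 : ∀ c : Fin (l.length + 1),
      ((psi l.length a q).1 c : ℤ)
        + (∑ x : Fin (l.length + 1), if x < c then ((psi l.length a q).2 (x, c) : ℤ) else 0)
        - (∑ x : Fin (l.length + 1), if c < x then ((psi l.length a q).2 (c, x) : ℤ) else 0)
        = ((a :: l).get c : ℤ) := by
    intro c
    induction c using Fin.cases with
    | zero =>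
        rw [Fin.sum_univ_succ (f := fun x : Fin (l.length + 1) =>
              if x < 0 then ((psi l.length a q).2 (x, 0) : ℤ) else 0),
            Fin.sum_univ_succ (f := fun x : Fin (l.length + 1) =>
              if (0 : Fin (l.length + 1)) < x then ((psi l.length a q).2 (0, x) : ℤ) else 0)]
        simp only [if_neg (lt_irrefl (0 : Fin (l.length + 1))),
          if_neg (Fin.not_lt_zero _), if_pos (Fin.succ_pos _),
          List.get_eq_getElem, Fin.val_zero, List.getElem_cons_zero,
          zero_add, Finset.sum_const_zero, add_zero, psi_two_zero_succ]
        have hcons : (psi l.length a q).1 0 = a + ∑ j : Fin l.length, q.1 j := by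
          simp [psi]
        rw [hcons]
        push_cast
        ring
    | succ j =>
        rw [Fin.sum_univ_succ (f := fun x : Fin (l.length + 1) =>
              if x < j.succ then ((psi l.length a q).2 (x, j.succ) : ℤ) else 0),
            Fin.sum_univ_succ (f := fun x : Fin (l.length + 1) =>
              if j.succ < x then ((psi l.length a q).2 (j.succ, x) : ℤ) else 0)]
        simp only [if_pos (Fin.succ_pos j), if_neg (Fin.not_lt_zero _),
          Fin.succ_lt_succ_iff, List.get_eq_getElem, Fin.val_succ,
          List.getElem_cons_succ, zero_add,
          psi_two_zero_succ, psi_two_succ_succ, psi_two_succ_zero]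
        have hcons : (psi l.length a q).1 j.succ = q.2.1 j - q.1 j := by
          simp [psi]
        rw [hcons]
        have hsub : ((q.2.1 j - q.1 j : ℕ) : ℤ) = (q.2.1 j : ℤ) - (q.1 j : ℤ) :=
          Nat.cast_sub (hb j)
        rw [hsub]
        have hc := hq.2 j
        have hget : (l.get j : ℤ) = (l[(j : ℕ)] : ℤ) := by rw [List.get_eq_getElem]
        linarith [hc, hget]
  exact ⟨part1, part2⟩

lemma phi_psi (m a : ℕ) (q : (Fin m → ℕ) × Idx m) (hb : ∀ j, q.1 j ≤ q.2.1 j) :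
    phi m (psi m a q) = q := by
  refine Prod.ext (funext fun j => ?_) (Prod.ext (funext fun j => ?_) (funext fun p => ?_))
  · exact psi_two_zero_succ m a q j
  · show (psi m a q).1 j.succ + (psi m a q).2 (0, j.succ) = q.2.1 j
    rw [psi_two_zero_succ]
    show q.2.1 j - q.1 j + q.1 j = q.2.1 j
    exact Nat.sub_add_cancel (hb j)
  · show (psi m a q).2 (p.1.succ, p.2.succ) = q.2.2 p
    rw [psi_two_succ_succ]

lemma psi_phi (a : ℕ) (l : List ℕ) (km : Idx (l.length + 1))
    (h : Cond (a :: l) km) : psi l.length a (phi l.length km) = km := by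
  have h1 : ∀ p : Fin (l.length + 1) × Fin (l.length + 1), ¬ p.1 < p.2 → km.2 p = 0 := h.1
  refine Prod.ext (funext fun i => ?_) (funext fun p => ?_)
  · induction i using Fin.cases with
    | zero =>
        show (a + ∑ j : Fin l.length, km.2 (0, j.succ)) = km.1 0
        exact ((cond_cons_1 h).2).symm
    | succ j =>
        show km.1 j.succ + km.2 (0, j.succ) - km.2 (0, j.succ) = km.1 j.succ
        omega
  · obtain ⟨p1, p2⟩ := p
    induction p1 using Fin.cases with
    | zero =>
        induction p2 using Fin.cases with
        | zero => exact (h1 (0, 0) (lt_irrefl 0)).symm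
        | succ j => exact psi_two_zero_succ _ _ _ j
    | succ i =>
        induction p2 using Fin.cases with
        | zero =>
            rw [psi_two_succ_zero]
            exact (h1 (i.succ, 0) (Fin.not_lt_zero _)).symm
        | succ j => exact psi_two_succ_succ _ _ _ i j

lemma wt_cons (uE : K4) (hE : uE ≠ 0) {a : ℕ} (ha : 0 < a) {l : List ℕ}
    {km : Idx (l.length + 1)} (h : Cond (a :: l) km) :
    wt uE (l.length + 1) km
      = (1 - uE / vv) * (tv / (uE * xv)) ^ a *
        ((∏ j : Fin l.length, gcoef uE (km.1 j.succ) * (tv / (uE * xv)) ^ (km.2 (0, j.succ))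
            * rr (km.2 (0, j.succ))) *
          Pin l.length fun p => km.2 (p.1.succ, p.2.succ)) := by
  have hkm0 := (cond_cons_1 h).2
  unfold wt Pin
  rw [Fin.prod_univ_succ (f := fun i => gcoef uE (km.1 i))]
  rw [show (∏ p : Fin (l.length + 1) × Fin (l.length + 1),
        if p.1 < p.2 then rr (km.2 p) else 1)
      = ∏ x : Fin (l.length + 1), ∏ y : Fin (l.length + 1),
          (if x < y then rr (km.2 (x, y)) else 1) from Fintype.prod_prod_type _]
  rw [Fin.prod_univ_succ (f := fun x : Fin (l.length + 1) =>
    ∏ y : Fin (l.length + 1), (if x < y then rr (km.2 (x, y)) else 1))]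
  rw [Fin.prod_univ_succ (f := fun y : Fin (l.length + 1) =>
    (if 0 < y then rr (km.2 (0, y)) else 1))]
  rw [if_neg (lt_irrefl (0 : Fin (l.length + 1)))]
  have e1 : ∀ j : Fin l.length, (if (0 : Fin (l.length + 1)) < j.succ
      then rr (km.2 (0, j.succ)) else 1) = rr (km.2 (0, j.succ)) :=
    fun j => if_pos (Fin.succ_pos j)
  rw [Finset.prod_congr rfl fun j _ => e1 j]
  have e2 : ∀ i : Fin l.length, (∏ y : Fin (l.length + 1),
      if i.succ < y then rr (km.2 (i.succ, y)) else 1)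
      = ∏ j : Fin l.length, (if i < j then rr (km.2 (i.succ, j.succ)) else 1) := by
    intro i
    rw [Fin.prod_univ_succ (f := fun y : Fin (l.length + 1) =>
      (if i.succ < y then rr (km.2 (i.succ, y)) else 1))]
    rw [if_neg (Fin.not_lt_zero _), one_mul]
    exact Finset.prod_congr rfl fun j _ => by simp only [Fin.succ_lt_succ_iff]
  rw [Finset.prod_congr rfl fun i _ => e2 i]
  rw [show (∏ i : Fin l.length, ∏ j : Fin l.length,
        (if i < j then rr (km.2 (i.succ, j.succ)) else 1))
      = ∏ p : Fin l.length × Fin l.length,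
          (if p.1 < p.2 then rr (km.2 (p.1.succ, p.2.succ)) else 1) from
    (Fintype.prod_prod_type (fun p : Fin l.length × Fin l.length =>
      if p.1 < p.2 then rr (km.2 (p.1.succ, p.2.succ)) else 1)).symm]
  rw [hkm0, gcoef_pos uE hE _ (by omega), pow_add,
    ← Finset.prod_pow_eq_pow_sum]
  simp only [Finset.prod_mul_distrib]
  ring

def Qp (l : List ℕ) (q : (Fin l.length → ℕ) × Idx l.length) : Prop :=
  Cond l q.2 ∧ ∀ j, q.1 j ≤ q.2.1 j

def Gbody (uE : K4) (a : ℕ) (l : List ℕ) (q : (Fin l.length → ℕ) × Idx l.length) : K4 :=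
  (1 - uE / vv) * (tv / (uE * xv)) ^ a *
    ((∏ j, gcoef uE (q.2.1 j - q.1 j) * (tv / (uE * xv)) ^ (q.1 j) * rr (q.1 j)) *
      Pin l.length q.2.2)

open Classical in
lemma inner_sum (uE : K4) (hE : uE ≠ 0) (a : ℕ) (l : List ℕ) (N : ℕ) (hNl : l.sum ≤ N)
    (km' : Idx l.length) :
    ∑ b ∈ (Fintype.piFinset fun _ : Fin l.length => range (N + 1)),
        (if Qp l (b, km') then Gbody uE a l (b, km') else 0)
      = (1 - uE / vv) * (tv / (uE * xv)) ^ a * F (uE / tv) l km' := by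
  by_cases hc : Cond l km'
  · have hn : ∀ j, km'.1 j ≤ N := fun j => le_trans (cond_n_le l hc j) hNl
    have hterm : ∀ b : Fin l.length → ℕ,
        (if Qp l (b, km') then Gbody uE a l (b, km') else 0)
          = ((1 - uE / vv) * (tv / (uE * xv)) ^ a * Pin l.length km'.2) *
            (∏ j, if b j ≤ km'.1 j then
                gcoef uE (km'.1 j - b j) * (tv / (uE * xv)) ^ (b j) * rr (b j) else 0) := by
      intro b
      by_cases hb : ∀ j, b j ≤ km'.1 j
      · have hQ : Qp l (b, km') := ⟨hc, hb⟩
        rw [if_pos hQ]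
        rw [Finset.prod_congr rfl fun j _ => if_pos (hb j)]
        unfold Gbody
        ring
      · rw [if_neg (fun hq : Qp l (b, km') => hb hq.2)]
        obtain ⟨j0, hj0⟩ := not_forall.1 hb
        rw [Finset.prod_eq_zero (Finset.mem_univ j0)
          (show (if b j0 ≤ km'.1 j0 then
              gcoef uE (km'.1 j0 - b j0) * (tv / (uE * xv)) ^ (b j0) * rr (b j0)
            else 0) = 0 from if_neg hj0)]
        ring
    rw [Finset.sum_congr rfl fun b _ => hterm b]
    rw [← Finset.mul_sum]
    rw [← Finset.prod_univ_sum (fun _ => range (N + 1))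
      (fun j x => if x ≤ km'.1 j then
        gcoef uE (km'.1 j - x) * (tv / (uE * xv)) ^ x * rr x else 0)]
    rw [Finset.prod_congr rfl fun j _ => (conv_ext uE hE (hn j)).symm]
    unfold F
    rw [if_pos hc]
    unfold wt Pin
    ring
  · rw [Finset.sum_eq_zero fun b _ => if_neg (fun hq : Qp l (b, km') => hc hq.1)]
    unfold F
    rw [if_neg hc]
    ring

lemma Gvx_cons (uE : K4) (hE : uE ≠ 0) (a : ℕ) (l : List ℕ) (ha : 0 < a) :
    Gvx uE (a :: l) = (1 - uE / vv) * (tv / (uE * xv)) ^ a * Gvx (uE / tv) l := by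
  classical
  set N := a + l.sum with hN
  have hNc : (a :: l).sum ≤ N := by simp [List.sum_cons, hN]
  have hNl : l.sum ≤ N := by omega
  have hL1 : Gvx uE (a :: l)
      = ∑ km ∈ (SB (l.length + 1) N).filter (fun km : Idx (l.length + 1) => Cond (a :: l) km),
          wt uE (l.length + 1) km := by
    rw [Gvx_finset uE (a :: l) N hNc, Finset.sum_filter]
    exact Finset.sum_congr rfl fun km _ => (if_congr Iff.rfl rfl rfl)
  have hR1 : Gvx (uE / tv) l = ∑ km' ∈ SB l.length N, F (uE / tv) l km' :=
    Gvx_finset _ l N hNl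
  have hmid : ∑ km ∈ (SB (l.length + 1) N).filter (fun km : Idx (l.length + 1) => Cond (a :: l) km),
        wt uE (l.length + 1) km
      = ∑ q ∈ ((Fintype.piFinset fun _ : Fin l.length => range (N + 1))
            ×ˢ SB l.length N).filter (Qp l), Gbody uE a l q := by
    refine Finset.sum_nbij' (phi l.length) (psi l.length a) ?_ ?_ ?_ ?_ ?_
    · intro km hkm
      rw [Finset.mem_filter] at hkm ⊢
      obtain ⟨hmem, hcond⟩ := hkm
      have hSB := mem_SB.1 hmem
      have hcl : Cond l (phi l.length km).2 := (cond_cons_1 hcond).1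
      constructor
      · rw [Finset.mem_product]
        constructor
        · rw [Fintype.mem_piFinset]
          intro j
          rw [Finset.mem_range]
          show km.2 (0, j.succ) < N + 1
          have := hSB.2 (0, j.succ)
          omega
        · refine mem_SB.2 ⟨fun j => ?_, fun p => hSB.2 (p.1.succ, p.2.succ)⟩
          have := cond_n_le l hcl j
          omega
      · exact ⟨hcl, fun j => Nat.le_add_left _ _⟩
    · intro q hq
      rw [Finset.mem_filter] at hq ⊢
      obtain ⟨hmem, hcl, hb⟩ := hq
      refine ⟨mem_SB.2 ⟨fun i => ?_, fun p => ?_⟩, cond_cons_2 a l q hcl hb⟩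
      · induction i using Fin.cases with
        | zero =>
            show a + ∑ j : Fin l.length, q.1 j ≤ N
            have hsum : ∑ j, q.2.1 j = l.sum := by
              have h' := cond_total l hcl
              have h'' : ((∑ j, q.2.1 j : ℕ) : ℤ) = (l.sum : ℤ) := by
                rw [Nat.cast_sum]; exact h'
              exact_mod_cast h''
            have hle : ∑ j, q.1 j ≤ ∑ j, q.2.1 j := Finset.sum_le_sum fun j _ => hb j
            omega
        | succ j =>
            show q.2.1 j - q.1 j ≤ N
            have := (mem_SB.1 (Finset.mem_product.1 hmem).2).1 j
            omega
      · obtain ⟨p1, p2⟩ := p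
        induction p1 using Fin.cases with
        | zero =>
            induction p2 using Fin.cases with
            | zero => rw [psi_two_zero_zero]; omega
            | succ j =>
                rw [psi_two_zero_succ]
                have := Fintype.mem_piFinset.1 (Finset.mem_product.1 hmem).1 j
                rw [Finset.mem_range] at this
                omega
        | succ i =>
            induction p2 using Fin.cases with
            | zero => rw [psi_two_succ_zero]; omega
            | succ j =>
                rw [psi_two_succ_succ]
                exact (mem_SB.1 (Finset.mem_product.1 hmem).2).2 (i, j)
    · intro km hkm
      exact psi_phi a l km (Finset.mem_filter.1 hkm).2
    · intro q hq
      exact phi_psi l.length a q ((Finset.mem_filter.1 hq).2).2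
    · intro km hkm
      have hcond := (Finset.mem_filter.1 hkm).2
      rw [wt_cons uE hE ha hcond]
      unfold Gbody phi
      simp only [Nat.add_sub_cancel]
  have hfin : ∑ q ∈ ((Fintype.piFinset fun _ : Fin l.length => range (N + 1))
        ×ˢ SB l.length N).filter (Qp l), Gbody uE a l q
      = (1 - uE / vv) * (tv / (uE * xv)) ^ a * Gvx (uE / tv) l := by
    rw [Finset.sum_filter, Finset.sum_product, Finset.sum_comm]
    rw [Finset.sum_congr rfl fun km' _ => inner_sum uE hE a l N hNl km']
    rw [← Finset.mul_sum, hR1]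
  rw [hL1, hmid, hfin]

lemma Gvx_prod : ∀ (l : List ℕ), (∀ x ∈ l, 0 < x) → ∀ uE : K4, uE ≠ 0 →
    Gvx uE l = ∏ i : Fin l.length,
      (1 - uE / (vv * tv ^ (i : ℕ))) * (tv ^ ((i : ℕ) + 1) / (uE * xv)) ^ (l.get i) := by
  intro l
  induction l with
  | nil =>
      intro _ uE _
      haveI : IsEmpty (Fin ([] : List ℕ).length) := ⟨fun i => Fin.elim0 i⟩
      rw [Gvx_nil]
      exact (Finset.prod_of_isEmpty _).symm
  | cons a l ih =>
      intro hpos uE hE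
      have ha : 0 < a := hpos a List.mem_cons_self
      rw [Gvx_cons uE hE a l ha]
      rw [ih (fun x hx => hpos x (List.mem_cons_of_mem a hx)) (uE / tv)
        (div_ne_zero hE tv_ne)]
      have hconv : (∏ i : Fin (a :: l).length,
            (1 - uE / (vv * tv ^ (i : ℕ))) * (tv ^ ((i : ℕ) + 1) / (uE * xv)) ^ ((a :: l).get i))
          = ∏ i : Fin (l.length + 1),
            (1 - uE / (vv * tv ^ (i : ℕ))) * (tv ^ ((i : ℕ) + 1) / (uE * xv)) ^ ((a :: l).get i) :=
        rfl
      rw [hconv, Fin.prod_univ_succ (f := fun i : Fin (l.length + 1) =>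
        (1 - uE / (vv * tv ^ (i : ℕ))) * (tv ^ ((i : ℕ) + 1) / (uE * xv)) ^ ((a :: l).get i))]
      have hfac : ∀ j : Fin l.length,
          (1 - (uE / tv) / (vv * tv ^ (j : ℕ)))
              * (tv ^ ((j : ℕ) + 1) / ((uE / tv) * xv)) ^ (l.get j)
            = (1 - uE / (vv * tv ^ ((j : ℕ) + 1)))
              * (tv ^ ((j : ℕ) + 1 + 1) / (uE * xv)) ^ (l.get j) := by
        intro j
        congr 2
        · rw [div_div, show tv * (vv * tv ^ (j : ℕ)) = vv * tv ^ ((j : ℕ) + 1) from by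
            rw [pow_succ]; ring]
        · rw [div_mul_eq_mul_div, div_div_eq_mul_div, ← pow_succ]
      rw [Finset.prod_congr rfl fun j _ => hfac j]
      simp only [Fin.val_succ, Fin.val_zero, List.get_eq_getElem,
        List.getElem_cons_zero, List.getElem_cons_succ, pow_zero, mul_one,
        zero_add, pow_one]

end GvxAux

/-- For every partition `μ = (μ₁, …, μ_m)` of length `m`:
`𝔊_μ(u) = ∏_{i=1}^{m} (1 − u/(v t^{i−1})) (t^{i}/(ux))^{μᵢ}` in `ℚ(t, u, v, x)`;
equivalently, `𝔊` satisfies the recursion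
`𝔊_{(μ₁,…,μ_m)}(u) = (1 − u/v)(t/(ux))^{μ₁} 𝔊_{(μ₂,…,μ_m)}(u/t)`, with `𝔊` of the
empty partition equal to `1`. -/
theorem Gvx_eq (mu : List ℕ) (h1 : mu.Pairwise (· ≥ ·)) (h2 : ∀ x ∈ mu, 0 < x) :
    (Gvx uv mu =
      ∏ i : Fin mu.length,
        (1 - uv / (vv * tv ^ (i : ℕ))) * (tv ^ ((i : ℕ) + 1) / (uv * xv)) ^ (mu.get i)) ∧
    (mu ≠ [] →
      Gvx uv mu = (1 - uv / vv) * (tv / (uv * xv)) ^ mu.headI * Gvx (uv / tv) mu.tail) ∧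
    (∀ uE : K4, Gvx uE [] = 1) := by
  refine ⟨GvxAux.Gvx_prod mu h2 uv GvxAux.uv_ne, fun hne => ?_, fun uE => GvxAux.Gvx_nil uE⟩
  cases mu with
  | nil => exact absurd rfl hne
  | cons a l =>
      exact GvxAux.Gvx_cons uv GvxAux.uv_ne a l (h2 a List.mem_cons_self)

end
end
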